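/- Define Ψ : 𝒞 → ℝ² by Ψ(c) = (u(1), e(1)), where (u,e) is the solution of the profile ODE on [0,1] corresponding to c ∈ 𝒞. Then Ψ is continuous on 𝒞, and Ψ extends to a continuous map on the closure of 𝒞; namely, there exists a continuous map Ψ̄ : cl(𝒞) → ℝ² with Ψ̄ = Ψ on 𝒞, where for c ∈ ∂𝒞, Ψ̄(c) = (u(1), 0) with (u,e) the continuous extension to [0,1] of the solution of the profile ODE for c (which satisfies e(1) = 0). -/

import Mathlib

noncomputable section

/-- `(u, e)` solves the profile ODE
`u′ = (u₀/α)(c₁ + u + Γ e/u)`, `e′ = (u₀/ν)(c₂ − c₁ u − u²/2 + e)`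
on the set `S`, with initial data `u 0 = u₀`, `e 0 = e₀`. -/
def IsProfileSol (Γ α ν u₀ e₀ : ℝ) (c : ℝ × ℝ) (u e : ℝ → ℝ) (S : Set ℝ) : Prop :=
  u 0 = u₀ ∧ e 0 = e₀ ∧
  ∀ x ∈ S,
    HasDerivWithinAt u ((u₀ / α) * (c.1 + u x + Γ * e x / u x)) S x ∧
    HasDerivWithinAt e ((u₀ / ν) * (c.2 - c.1 * u x - (u x) ^ 2 / 2 + e x)) S x

/-- The feasible set 𝒞: the set of constants of integration `c` for which the solution of
the profile ODE is defined on `[0,1]` with `u > 0` and `e > 0` on `[0,1]`. -/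
def Feasible (Γ α ν u₀ e₀ : ℝ) : Set (ℝ × ℝ) :=
  {c | ∃ u e : ℝ → ℝ,
    IsProfileSol Γ α ν u₀ e₀ c u e (Set.Icc 0 1) ∧
    ∀ x ∈ Set.Icc (0:ℝ) 1, 0 < u x ∧ 0 < e x}

open Set Filter Topology intervalIntegral Real MeasureTheory

namespace NSP

/-- Bundled data. -/
structure D where
  Γ : ℝ
  α : ℝ
  ν : ℝ
  u₀ : ℝ
  e₀ : ℝ
  R : ℝ
  hΓ : 0 < Γ
  hα : 0 < α
  hν : 0 < ν
  hu0 : 0 < u₀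
  he0 : 0 < e₀
  hR : 1 ≤ R

namespace D

variable (d : D)

def k1 : ℝ := d.u₀ / d.α
def k2 : ℝ := d.u₀ / d.ν

lemma k1_pos : 0 < d.k1 := div_pos d.hu0 d.hα
lemma k2_pos : 0 < d.k2 := div_pos d.hu0 d.hν
lemma R_pos : 0 < d.R := lt_of_lt_of_le one_pos d.hR

def Fu (c p : ℝ × ℝ) : ℝ := d.k1 * (c.1 + p.1 + d.Γ * p.2 / p.1)
def Fe (c p : ℝ × ℝ) : ℝ := d.k2 * (c.2 - c.1 * p.1 - p.1 ^ 2 / 2 + p.2)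

lemma continuous_Fe (c : ℝ × ℝ) : Continuous (fun p : ℝ × ℝ => d.Fe c p) := by
  unfold Fe; fun_prop

/-- The feasible set. -/
def feas : Set (ℝ × ℝ) := Feasible d.Γ d.α d.ν d.u₀ d.e₀

/-- A feasible solution. -/
def FSol (c : ℝ × ℝ) (u e : ℝ → ℝ) : Prop :=
  IsProfileSol d.Γ d.α d.ν d.u₀ d.e₀ c u e (Set.Icc 0 1) ∧
    ∀ x ∈ Set.Icc (0:ℝ) 1, 0 < u x ∧ 0 < e x

lemma mem_feas {c : ℝ × ℝ} : c ∈ d.feas ↔ ∃ u e : ℝ → ℝ, d.FSol c u e := Iff.rfl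

/-- Classical solution data on `[0,1)`, with continuity up to `1`. -/
def PSol (c : ℝ × ℝ) (u e : ℝ → ℝ) : Prop :=
  ContinuousOn u (Icc 0 1) ∧ ContinuousOn e (Icc 0 1) ∧ u 0 = d.u₀ ∧ e 0 = d.e₀ ∧
  (∀ t ∈ Ico (0:ℝ) 1, HasDerivWithinAt u (d.Fu c (u t, e t)) (Ici t) t ∧
     HasDerivWithinAt e (d.Fe c (u t, e t)) (Ici t) t) ∧
  (∀ t ∈ Ico (0:ℝ) 1, 0 < u t ∧ 0 < e t)

/- ### Constants -/

def Kc : ℝ := d.u₀ * max (1/d.α) ((d.Γ+1)/d.ν)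
def Bc : ℝ := (d.α/2 * d.u₀^2 + d.ν * d.e₀ + d.u₀ * d.R / d.Kc) * exp d.Kc
def Uc : ℝ := Real.sqrt (2 * d.Bc / d.α)
def Ec : ℝ := d.Bc / d.ν
def Dc : ℝ := d.k2 * (d.R + d.R * d.Uc + d.Uc^2/2 + d.Ec)
def κc : ℝ := min (min (d.u₀/d.e₀) 1) (d.Γ / (d.R + (1 + d.Dc)/d.k1))
def Qc : ℝ := max (d.Ec/d.u₀) (1/d.κc)
def Mc : ℝ := max (d.k1 * (d.R + d.Uc + d.Γ * d.Qc)) d.Dc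

lemma Kc_pos : 0 < d.Kc := by
  have h1 : (0:ℝ) < 1/d.α := by have := d.hα; positivity
  exact mul_pos d.hu0 (lt_max_of_lt_left h1)

lemma Bc_pos : 0 < d.Bc := by
  have h1 := d.hα; have h2 := d.hν; have h3 := d.hu0; have h4 := d.he0
  have h5 := d.R_pos; have h6 := d.Kc_pos
  have : (0:ℝ) < Real.exp d.Kc := Real.exp_pos _
  unfold Bc; positivity

lemma Uc_pos : 0 < d.Uc := by
  have h1 := d.hα; have h2 := d.Bc_pos
  exact Real.sqrt_pos.2 (by positivity)

lemma Ec_pos : 0 < d.Ec := div_pos d.Bc_pos d.hν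

lemma Dc_pos : 0 < d.Dc := by
  have h1 := d.R_pos; have h2 := d.Uc_pos; have h3 := d.Ec_pos; have h4 := d.k2_pos
  unfold Dc; positivity

lemma κc_pos : 0 < d.κc := by
  have h1 := d.hu0; have h2 := d.he0; have h3 := d.hΓ; have h4 := d.R_pos
  have h5 := d.Dc_pos; have h6 := d.k1_pos
  have : (0:ℝ) < d.R + (1 + d.Dc)/d.k1 := by positivity
  exact lt_min (lt_min (by positivity) one_pos) (by positivity)

lemma κc_le_one : d.κc ≤ 1 :=
  le_trans (min_le_left _ _) (min_le_right _ _)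

lemma Mc_pos : 0 < d.Mc := lt_of_lt_of_le d.Dc_pos (le_max_right _ _)

/- ### A priori estimates for feasible solutions -/

variable {d}

lemma FSol.du {c : ℝ × ℝ} {u e : ℝ → ℝ} (h : d.FSol c u e) :
    ∀ t ∈ Icc (0:ℝ) 1, HasDerivWithinAt u (d.Fu c (u t, e t)) (Icc 0 1) t :=
  fun t ht => (h.1.2.2 t ht).1

lemma FSol.de {c : ℝ × ℝ} {u e : ℝ → ℝ} (h : d.FSol c u e) :
    ∀ t ∈ Icc (0:ℝ) 1, HasDerivWithinAt e (d.Fe c (u t, e t)) (Icc 0 1) t :=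
  fun t ht => (h.1.2.2 t ht).2

lemma FSol.cu {c : ℝ × ℝ} {u e : ℝ → ℝ} (h : d.FSol c u e) : ContinuousOn u (Icc 0 1) :=
  fun t ht => (h.du t ht).continuousWithinAt

lemma FSol.ce {c : ℝ × ℝ} {u e : ℝ → ℝ} (h : d.FSol c u e) : ContinuousOn e (Icc 0 1) :=
  fun t ht => (h.de t ht).continuousWithinAt

lemma FSol.upos {c : ℝ × ℝ} {u e : ℝ → ℝ} (h : d.FSol c u e) :
    ∀ t ∈ Icc (0:ℝ) 1, 0 < u t := fun t ht => (h.2 t ht).1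

lemma FSol.epos {c : ℝ × ℝ} {u e : ℝ → ℝ} (h : d.FSol c u e) :
    ∀ t ∈ Icc (0:ℝ) 1, 0 < e t := fun t ht => (h.2 t ht).2

/-- Pass from a within-`Icc 0 1` derivative to a within-`Ici` derivative. -/
lemma deriv_Ici {f : ℝ → ℝ} {v t : ℝ} (h : HasDerivWithinAt f v (Icc 0 1) t)
    (ht : 0 ≤ t) (h1 : t < 1) : HasDerivWithinAt f v (Ici t) t := by
  have h' : HasDerivWithinAt f v (Icc t 1) t := h.mono (Icc_subset_Icc_left ht)
  apply h'.mono_of_mem_nhdsWithin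
  rw [← Ici_inter_Iic]
  exact inter_mem self_mem_nhdsWithin (mem_nhdsWithin_of_mem_nhds (Iic_mem_nhds h1))

/-- Pass from a within-`Icc 0 1` derivative to a within-`Ioi` derivative. -/
lemma deriv_Ioi {f : ℝ → ℝ} {v t : ℝ} (h : HasDerivWithinAt f v (Icc 0 1) t)
    (ht : 0 ≤ t) (h1 : t < 1) : HasDerivWithinAt f v (Ioi t) t := by
  have h' : HasDerivWithinAt f v (Icc t 1) t := h.mono (Icc_subset_Icc_left ht)
  apply h'.mono_of_mem_nhdsWithin
  have : Ioc t 1 ∈ 𝓝[Ioi t] t := by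
    rw [← Ioi_inter_Iic]
    exact inter_mem self_mem_nhdsWithin (mem_nhdsWithin_of_mem_nhds (Iic_mem_nhds h1))
  exact mem_of_superset this Ioc_subset_Icc_self

lemma FSol.contFe {c : ℝ × ℝ} {u e : ℝ → ℝ} (h : d.FSol c u e) :
    ContinuousOn (fun s => d.Fe c (u s, e s)) (Icc 0 1) := by
  apply ContinuousOn.mul continuousOn_const
  exact ((continuousOn_const.sub (continuousOn_const.mul h.cu)).sub
    ((h.cu.pow 2).div_const 2)).add h.ce

lemma FSol.contFu {c : ℝ × ℝ} {u e : ℝ → ℝ} (h : d.FSol c u e) :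
    ContinuousOn (fun s => d.Fu c (u s, e s)) (Icc 0 1) := by
  apply ContinuousOn.mul continuousOn_const
  exact (continuousOn_const.add h.cu).add
    ((continuousOn_const.mul h.ce).div h.cu (fun t ht => (h.upos t ht).ne'))

/-- Upper bounds. -/
lemma FSol.bounds {c : ℝ × ℝ} {u e : ℝ → ℝ} (h : d.FSol c u e)
    (hb1 : |c.1| ≤ d.R) (hb2 : |c.2| ≤ d.R) :
    ∀ t ∈ Icc (0:ℝ) 1, u t ≤ d.Uc ∧ e t ≤ d.Ec := by
  have hα := d.hα; have hν := d.hν; have hu0 := d.hu0; have hK := d.Kc_pos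
  have hR := d.R_pos
  set W : ℝ → ℝ := fun t => d.α/2 * (u t)^2 + d.ν * e t with hWdef
  set A : ℝ := d.u₀ * d.R / d.Kc with hAdef
  have hA : 0 ≤ A := by positivity
  have hWd : ∀ t ∈ Icc (0:ℝ) 1, HasDerivWithinAt W
      (d.u₀ * (c.2 + (u t)^2/2 + (d.Γ+1) * e t)) (Icc 0 1) t := by
    intro t ht
    have h1 := h.du t ht
    have h2 := h.de t ht
    have hup := h.upos t ht
    have key : HasDerivWithinAt W
        (d.α/2 * ((2:ℕ) * u t ^ 1 * d.Fu c (u t, e t)) + d.ν * d.Fe c (u t, e t))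
        (Icc 0 1) t := ((h1.pow 2).const_mul _).add (h2.const_mul _)
    convert key using 1
    unfold Fu Fe k1 k2
    have hune : u t ≠ 0 := hup.ne'
    field_simp
    ring
  have hWb : ∀ t ∈ Icc (0:ℝ) 1,
      d.u₀ * (c.2 + (u t)^2/2 + (d.Γ+1) * e t) ≤ d.Kc * W t + d.u₀ * d.R := by
    intro t ht
    have he0 := (h.epos t ht).le
    have f1 : d.u₀ * (1/d.α) ≤ d.Kc := mul_le_mul_of_nonneg_left (le_max_left _ _) hu0.le
    have f2 : d.u₀ * ((d.Γ+1)/d.ν) ≤ d.Kc := mul_le_mul_of_nonneg_left (le_max_right _ _) hu0.le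
    have g1 : d.u₀ * ((u t)^2/2) ≤ d.Kc * (d.α/2 * (u t)^2) := by
      calc d.u₀ * ((u t)^2/2) = (d.u₀ * (1/d.α)) * (d.α/2 * (u t)^2) := by
            field_simp
        _ ≤ d.Kc * (d.α/2 * (u t)^2) := mul_le_mul_of_nonneg_right f1 (by positivity)
    have g2 : d.u₀ * ((d.Γ+1) * e t) ≤ d.Kc * (d.ν * e t) := by
      calc d.u₀ * ((d.Γ+1) * e t) = (d.u₀ * ((d.Γ+1)/d.ν)) * (d.ν * e t) := by
            field_simp
        _ ≤ d.Kc * (d.ν * e t) := mul_le_mul_of_nonneg_right f2 (by positivity)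
    have g3 : d.u₀ * c.2 ≤ d.u₀ * d.R :=
      mul_le_mul_of_nonneg_left (le_trans (le_abs_self _) hb2) hu0.le
    have expand : d.u₀ * (c.2 + (u t)^2/2 + (d.Γ+1) * e t)
        = d.u₀ * c.2 + d.u₀ * ((u t)^2/2) + d.u₀ * ((d.Γ+1) * e t) := by ring
    have expand2 : d.Kc * W t = d.Kc * (d.α/2 * (u t)^2) + d.Kc * (d.ν * e t) := by
      rw [hWdef]; ring
    rw [expand, expand2]; linarith
  set g : ℝ → ℝ := fun t => (W t + A) * Real.exp (-d.Kc * t) with hgdef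
  have hgd : ∀ t ∈ Icc (0:ℝ) 1, HasDerivWithinAt g
      ((d.u₀ * (c.2 + (u t)^2/2 + (d.Γ+1) * e t)) * Real.exp (-d.Kc * t)
        + (W t + A) * (Real.exp (-d.Kc * t) * (-d.Kc))) (Icc 0 1) t := by
    intro t ht
    have hexp : HasDerivAt (fun s : ℝ => Real.exp (-d.Kc * s))
        (Real.exp (-d.Kc * t) * (-d.Kc)) t := by
      have : HasDerivAt (fun s : ℝ => -d.Kc * s) (-d.Kc) t := by
        simpa using (hasDerivAt_id t).const_mul (-d.Kc)
      simpa [mul_comm] using this.exp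
    exact ((hWd t ht).add_const A).mul (hexp.hasDerivWithinAt)
  have hganti : AntitoneOn g (Icc 0 1) := by
    apply antitoneOn_of_hasDerivWithinAt_nonpos (convex_Icc 0 1)
      (fun t ht => ((hgd t ht).continuousWithinAt))
      (f' := fun t => (d.u₀ * (c.2 + (u t)^2/2 + (d.Γ+1) * e t)) * Real.exp (-d.Kc * t)
        + (W t + A) * (Real.exp (-d.Kc * t) * (-d.Kc)))
    · intro t ht
      rw [interior_Icc] at ht ⊢
      exact (hgd t (Ioo_subset_Icc_self ht)).mono Ioo_subset_Icc_self
    · intro t ht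
      rw [interior_Icc] at ht
      have hWbt := hWb t (Ioo_subset_Icc_self ht)
      have hexp0 : (0:ℝ) < Real.exp (-d.Kc * t) := Real.exp_pos _
      have hKA : d.Kc * A = d.u₀ * d.R := by
        rw [hAdef]; field_simp
      nlinarith [hWbt, hexp0]
  have hfinal : ∀ t ∈ Icc (0:ℝ) 1, W t ≤ d.Bc := by
    intro t ht
    have hg0 : g t ≤ g 0 := hganti (left_mem_Icc.2 zero_le_one) ht ht.1
    have hg0v : g 0 = W 0 + A := by
      rw [hgdef]; simp
    have hW0 : W 0 = d.α/2 * d.u₀^2 + d.ν * d.e₀ := by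
      rw [hWdef]; simp [h.1.1, h.1.2.1]
    have hexp0 : (0:ℝ) < Real.exp (-d.Kc * t) := Real.exp_pos _
    have step : W t + A ≤ (W 0 + A) * Real.exp (d.Kc * t) := by
      have h2 : (W t + A) * Real.exp (-d.Kc * t) ≤ W 0 + A := by
        calc (W t + A) * Real.exp (-d.Kc * t) = g t := rfl
          _ ≤ g 0 := hg0
          _ = W 0 + A := hg0v
      have h3 : (W t + A) ≤ (W 0 + A) / Real.exp (-d.Kc * t) := by
        rw [le_div_iff₀ hexp0]; exact h2
      have h4 : (W 0 + A) / Real.exp (-d.Kc * t) = (W 0 + A) * Real.exp (d.Kc * t) := by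
        rw [neg_mul, Real.exp_neg]
        field_simp
      rw [← h4]; exact h3
    have hW0A : 0 ≤ W 0 + A := by
      rw [hW0]
      have := d.he0
      positivity
    have hmono : Real.exp (d.Kc * t) ≤ Real.exp d.Kc := by
      apply Real.exp_le_exp.2
      nlinarith [ht.2, hK]
    have : W t + A ≤ (W 0 + A) * Real.exp d.Kc :=
      le_trans step (mul_le_mul_of_nonneg_left hmono hW0A)
    have hBc : d.Bc = (W 0 + A) * Real.exp d.Kc := by
      rw [hW0, hAdef]; rfl
    rw [hBc]; linarith
  intro t ht
  have hWt := hfinal t ht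
  have hup := (h.upos t ht).le
  have hep := (h.epos t ht).le
  constructor
  · have husq : (u t)^2 ≤ 2 * d.Bc / d.α := by
      have hts : d.α/2 * (u t)^2 ≤ d.Bc := by
        have hνe : 0 ≤ d.ν * e t := by positivity
        have hWts : d.α/2 * (u t)^2 + d.ν * e t ≤ d.Bc := hWt
        linarith
      have hgoal : (u t)^2 * d.α ≤ 2 * d.Bc := by nlinarith
      have h4 : (u t)^2 = ((u t)^2 * d.α) / d.α := by field_simp
      rw [h4]
      exact div_le_div₀ (by have := d.Bc_pos; positivity) hgoal hα le_rfl
    calc u t = Real.sqrt ((u t)^2) := (Real.sqrt_sq hup).symm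
      _ ≤ Real.sqrt (2 * d.Bc / d.α) := Real.sqrt_le_sqrt husq
      _ = d.Uc := rfl
  · have hνe : d.ν * e t ≤ d.Bc := by
      have hsq : 0 ≤ d.α/2 * (u t)^2 := by positivity
      have hWts : d.α/2 * (u t)^2 + d.ν * e t ≤ d.Bc := hWt
      linarith
    unfold Ec
    have hgoal : e t * d.ν ≤ d.Bc := by nlinarith
    have h4 : e t = (e t * d.ν) / d.ν := by field_simp
    rw [h4]
    exact div_le_div₀ (by have := d.Bc_pos; positivity) hgoal hν le_rfl

/-- Invariant lower region. -/
lemma FSol.low {c : ℝ × ℝ} {u e : ℝ → ℝ} (h : d.FSol c u e)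
    (hb1 : |c.1| ≤ d.R) (hb2 : |c.2| ≤ d.R) :
    ∀ t ∈ Icc (0:ℝ) 1, min d.u₀ (d.κc * e t) ≤ u t := by
  have hFeB : ∀ t ∈ Icc (0:ℝ) 1, |d.Fe c (u t, e t)| ≤ d.Dc := by
    intro t ht
    have hb := h.bounds hb1 hb2 t ht
    have hup := (h.upos t ht).le
    have hep := (h.epos t ht).le
    unfold Fe Dc
    rw [abs_mul, abs_of_pos d.k2_pos]
    apply mul_le_mul_of_nonneg_left _ d.k2_pos.le
    have tri : |c.2 - c.1 * u t - (u t)^2/2 + e t|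
        ≤ |c.2| + |c.1 * u t| + |(u t)^2/2| + |e t| := by
      have h1 : c.2 - c.1 * u t - (u t)^2/2 + e t
          = (c.2 + -(c.1 * u t)) + -((u t)^2/2) + e t := by ring
      rw [h1]
      calc |(c.2 + -(c.1 * u t)) + -((u t)^2/2) + e t|
          ≤ |c.2 + -(c.1 * u t)| + |-((u t)^2/2)| + |e t| := abs_add_three _ _ _
        _ ≤ (|c.2| + |-(c.1 * u t)|) + |-((u t)^2/2)| + |e t| := by
            have := abs_add_le c.2 (-(c.1 * u t)); linarith
        _ = |c.2| + |c.1 * u t| + |(u t)^2/2| + |e t| := by rw [abs_neg, abs_neg]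
    have b1 : |c.1 * u t| ≤ d.R * d.Uc := by
      rw [abs_mul, abs_of_nonneg hup]
      exact mul_le_mul hb1 hb.1 hup (le_of_lt d.R_pos)
    have b2 : |(u t)^2/2| ≤ d.Uc^2/2 := by
      rw [abs_of_nonneg (by positivity)]
      have : (u t)^2 ≤ d.Uc^2 := by nlinarith [hb.1]
      linarith
    have b3 : |e t| ≤ d.Ec := by rw [abs_of_nonneg hep]; exact hb.2
    linarith
  by_contra hcon
  push_neg at hcon
  obtain ⟨t₁, ht₁, hlt⟩ := hcon
  have ht₁' : t₁ ∈ Icc (0:ℝ) 1 := ht₁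
  set Bs := {t ∈ Icc (0:ℝ) t₁ | min d.u₀ (d.κc * e t) ≤ u t} with hBdef
  have h0B : (0:ℝ) ∈ Bs := by
    refine ⟨⟨le_refl 0, ht₁.1⟩, ?_⟩
    rw [h.1.1]
    exact min_le_left _ _
  have hBclosed : IsClosed Bs := by
    have : Bs = Icc (0:ℝ) t₁ ∩ (fun t => u t - min d.u₀ (d.κc * e t)) ⁻¹' (Ici 0) := by
      ext x
      simp only [hBdef, mem_setOf_eq, mem_inter_iff, mem_preimage, mem_Ici, sub_nonneg]
    rw [this]
    apply ContinuousOn.preimage_isClosed_of_isClosed _ isClosed_Icc isClosed_Ici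
    have hsub : Icc (0:ℝ) t₁ ⊆ Icc 0 1 := Icc_subset_Icc le_rfl ht₁.2
    have hmin : ContinuousOn (fun t => min d.u₀ (d.κc * e t)) (Icc 0 t₁) :=
      (continuous_const.min continuous_id).comp_continuousOn
        (continuousOn_const.mul (h.ce.mono hsub))
    exact (h.cu.mono hsub).sub hmin
  have hBbdd : BddAbove Bs := ⟨t₁, fun x hx => hx.1.2⟩
  set t₀ := sSup Bs with ht₀def
  have ht₀B : t₀ ∈ Bs := hBclosed.csSup_mem ⟨0, h0B⟩ hBbdd
  have ht₀lt : t₀ < t₁ := by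
    rcases lt_or_eq_of_le ht₀B.1.2 with hl | heq
    · exact hl
    · exfalso; rw [heq] at ht₀B; exact absurd ht₀B.2 (not_le.2 hlt)
  have ht₀0 : 0 ≤ t₀ := ht₀B.1.1
  have hvio : ∀ s, t₀ < s → s ≤ t₁ → u s < d.u₀ ∧ u s < d.κc * e s := by
    intro s hs1 hs2
    have hnot : s ∉ Bs := fun hmem => absurd (le_csSup hBbdd hmem) (not_le.2 hs1)
    have : ¬ (min d.u₀ (d.κc * e s) ≤ u s) := fun hle =>
      hnot ⟨⟨le_trans ht₀0 (le_of_lt hs1), hs2⟩, hle⟩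
    exact lt_min_iff.1 (not_le.1 this)
  have hsub01 : Icc t₀ t₁ ⊆ Icc (0:ℝ) 1 := Icc_subset_Icc ht₀0 ht₁.2
  have hFularge : ∀ s ∈ Ioo t₀ t₁, 1 + d.Dc ≤ d.Fu c (u s, e s) := by
    intro s hs
    have hs' : s ∈ Icc (0:ℝ) 1 := hsub01 (Ioo_subset_Icc_self hs)
    have hv := hvio s hs.1 (le_of_lt hs.2)
    have hup := h.upos s hs'
    have hκ := d.κc_pos
    have hdivlarge : d.Γ / d.κc ≤ d.Γ * e s / u s := by
      have h1 : u s / d.κc < e s := by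
        rw [div_lt_iff₀ hκ]; nlinarith [hv.2]
      have h2 : d.Γ / d.κc ≤ d.Γ * (e s / u s) := by
        have : 1 / d.κc ≤ e s / u s := by
          rw [div_le_div_iff₀ hκ hup]
          nlinarith [hv.2]
        calc d.Γ / d.κc = d.Γ * (1 / d.κc) := by ring
          _ ≤ d.Γ * (e s / u s) := mul_le_mul_of_nonneg_left this d.hΓ.le
      rw [mul_div_assoc]; exact h2
    have hκbound : d.R + (1 + d.Dc)/d.k1 ≤ d.Γ / d.κc := by
      have hX : (0:ℝ) < d.R + (1 + d.Dc)/d.k1 := by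
        have := d.R_pos; have := d.Dc_pos; have := d.k1_pos; positivity
      have hκle : d.κc ≤ d.Γ / (d.R + (1 + d.Dc)/d.k1) := min_le_right _ _
      rw [le_div_iff₀ hκ]
      rw [le_div_iff₀ hX] at hκle
      nlinarith
    have hc1 : -d.R ≤ c.1 := by
      have := abs_le.1 hb1; linarith [this.1]
    have : d.Fu c (u s, e s) ≥ d.k1 * (-d.R + 0 + (d.R + (1 + d.Dc)/d.k1)) := by
      unfold Fu
      apply mul_le_mul_of_nonneg_left _ d.k1_pos.le
      have := le_trans hκbound hdivlarge
      linarith [hup.le]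
    have hk1 := d.k1_pos
    calc (1:ℝ) + d.Dc = d.k1 * (-d.R + 0 + (d.R + (1 + d.Dc)/d.k1)) := by field_simp; ring
      _ ≤ d.Fu c (u s, e s) := this
  have humono : MonotoneOn u (Icc t₀ t₁) := by
    apply monotoneOn_of_hasDerivWithinAt_nonneg (convex_Icc t₀ t₁)
      (h.cu.mono hsub01) (f' := fun s => d.Fu c (u s, e s))
    · intro s hs
      rw [interior_Icc] at hs ⊢
      exact (h.du s (hsub01 (Ioo_subset_Icc_self hs))).mono
        (subset_trans Ioo_subset_Icc_self hsub01)
    · intro s hs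
      rw [interior_Icc] at hs
      have := hFularge s hs
      have := d.Dc_pos
      linarith
  have hgmono : MonotoneOn (fun s => u s - d.κc * e s) (Icc t₀ t₁) := by
    apply monotoneOn_of_hasDerivWithinAt_nonneg (convex_Icc t₀ t₁)
      ((h.cu.mono hsub01).sub (continuousOn_const.mul (h.ce.mono hsub01)))
      (f' := fun s => d.Fu c (u s, e s) - d.κc * d.Fe c (u s, e s))
    · intro s hs
      rw [interior_Icc] at hs ⊢
      have hs' : s ∈ Icc (0:ℝ) 1 := hsub01 (Ioo_subset_Icc_self hs)
      have hdu := (h.du s hs').mono (subset_trans Ioo_subset_Icc_self hsub01)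
      have hde := (h.de s hs').mono (subset_trans Ioo_subset_Icc_self hsub01)
      exact hdu.sub (hde.const_mul _)
    · intro s hs
      rw [interior_Icc] at hs
      have hs' : s ∈ Icc (0:ℝ) 1 := hsub01 (Ioo_subset_Icc_self hs)
      have h1 := hFularge s hs
      have h2 := hFeB s hs'
      have hκ1 := d.κc_le_one
      have hκ0 := d.κc_pos
      have : d.κc * d.Fe c (u s, e s) ≤ d.Dc := by
        have ha := abs_le.1 h2
        nlinarith [ha.2]
      linarith
  have hmem₀ : t₀ ∈ Icc t₀ t₁ := left_mem_Icc.2 (le_of_lt ht₀lt)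
  have hmem₁ : t₁ ∈ Icc t₀ t₁ := right_mem_Icc.2 (le_of_lt ht₀lt)
  have hvt₁ := hvio t₁ ht₀lt le_rfl
  rcases le_total d.u₀ (d.κc * e t₀) with hc | hc
  · have hut₀ : d.u₀ ≤ u t₀ := by
      have := ht₀B.2; rw [min_eq_left hc] at this; exact this
    have := humono hmem₀ hmem₁ (le_of_lt ht₀lt)
    linarith [hvt₁.1]
  · have hut₀ : d.κc * e t₀ ≤ u t₀ := by
      have := ht₀B.2; rw [min_eq_right hc] at this; exact this
    have := hgmono hmem₀ hmem₁ (le_of_lt ht₀lt)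
    simp only at this
    linarith [hvt₁.2]

/-- Derivative bounds. -/
lemma FSol.derivBound {c : ℝ × ℝ} {u e : ℝ → ℝ} (h : d.FSol c u e)
    (hb1 : |c.1| ≤ d.R) (hb2 : |c.2| ≤ d.R) :
    ∀ t ∈ Icc (0:ℝ) 1, |d.Fu c (u t, e t)| ≤ d.Mc ∧ |d.Fe c (u t, e t)| ≤ d.Mc := by
  intro t ht
  have hb := h.bounds hb1 hb2 t ht
  have hl := h.low hb1 hb2 t ht
  have hup := h.upos t ht
  have hep := h.epos t ht
  have hκ := d.κc_pos
  have hQ : e t / u t ≤ d.Qc := by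
    rcases le_total d.u₀ (d.κc * e t) with hc | hc
    · have hu0le : d.u₀ ≤ u t := by rw [min_eq_left hc] at hl; exact hl
      have : e t / u t ≤ d.Ec / d.u₀ :=
        div_le_div₀ d.Ec_pos.le hb.2 d.hu0 hu0le
      exact le_trans this (le_max_left _ _)
    · have hκle : d.κc * e t ≤ u t := by rw [min_eq_right hc] at hl; exact hl
      have : e t / u t ≤ 1 / d.κc := by
        rw [div_le_div_iff₀ hup hκ]
        nlinarith
      exact le_trans this (le_max_right _ _)
  constructor
  · have key : |d.Fu c (u t, e t)| ≤ d.k1 * (d.R + d.Uc + d.Γ * d.Qc) := by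
      rw [Fu, abs_mul, abs_of_pos d.k1_pos]
      apply mul_le_mul_of_nonneg_left _ d.k1_pos.le
      have tri := abs_add_three c.1 (u t) (d.Γ * e t / u t)
      have b1 : |u t| ≤ d.Uc := by rw [abs_of_nonneg hup.le]; exact hb.1
      have b2 : |d.Γ * e t / u t| ≤ d.Γ * d.Qc := by
        have heq : d.Γ * e t / u t = d.Γ * (e t / u t) := by ring
        rw [heq, abs_mul, abs_of_pos d.hΓ, abs_of_nonneg (by positivity)]
        exact mul_le_mul_of_nonneg_left hQ d.hΓ.le
      linarith
    exact le_trans key (le_max_left _ _)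
  · have key : |d.Fe c (u t, e t)| ≤ d.Dc := by
      rw [Fe, abs_mul, abs_of_pos d.k2_pos, Dc]
      apply mul_le_mul_of_nonneg_left _ d.k2_pos.le
      have h1 : c.2 - c.1 * u t - (u t)^2/2 + e t
          = (c.2 + -(c.1 * u t)) + -((u t)^2/2) + e t := by ring
      have tri : |c.2 - c.1 * u t - (u t)^2/2 + e t|
          ≤ |c.2| + |c.1 * u t| + |(u t)^2/2| + |e t| := by
        rw [h1]
        calc |(c.2 + -(c.1 * u t)) + -((u t)^2/2) + e t|
            ≤ |c.2 + -(c.1 * u t)| + |-((u t)^2/2)| + |e t| := abs_add_three _ _ _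
          _ ≤ (|c.2| + |-(c.1 * u t)|) + |-((u t)^2/2)| + |e t| := by
              have := abs_add_le c.2 (-(c.1 * u t)); linarith
          _ = |c.2| + |c.1 * u t| + |(u t)^2/2| + |e t| := by rw [abs_neg, abs_neg]
      have b1 : |c.1 * u t| ≤ d.R * d.Uc := by
        rw [abs_mul, abs_of_nonneg hup.le]
        exact mul_le_mul hb1 hb.1 hup.le (le_of_lt d.R_pos)
      have b2 : |(u t)^2/2| ≤ d.Uc^2/2 := by
        rw [abs_of_nonneg (by positivity)]
        nlinarith [hb.1, hup.le]
      have b3 : |e t| ≤ d.Ec := by rw [abs_of_nonneg hep.le]; exact hb.2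
      linarith
    exact le_trans key (le_max_right _ _)

/-- Lipschitz bound in time. -/
lemma FSol.lipsch {c : ℝ × ℝ} {u e : ℝ → ℝ} (h : d.FSol c u e)
    (hb1 : |c.1| ≤ d.R) (hb2 : |c.2| ≤ d.R) :
    ∀ s ∈ Icc (0:ℝ) 1, ∀ t ∈ Icc (0:ℝ) 1,
      |u s - u t| ≤ d.Mc * |s - t| ∧ |e s - e t| ≤ d.Mc * |s - t| := by
  intro s hs t ht
  constructor
  · have := (convex_Icc (0:ℝ) 1).norm_image_sub_le_of_norm_hasDerivWithin_le
      (f' := fun x => d.Fu c (u x, e x)) (fun x hx => h.du x hx)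
      (fun x hx => by rw [Real.norm_eq_abs]; exact (h.derivBound hb1 hb2 x hx).1) ht hs
    simpa [Real.norm_eq_abs] using this
  · have := (convex_Icc (0:ℝ) 1).norm_image_sub_le_of_norm_hasDerivWithin_le
      (f' := fun x => d.Fe c (u x, e x)) (fun x hx => h.de x hx)
      (fun x hx => by rw [Real.norm_eq_abs]; exact (h.derivBound hb1 hb2 x hx).2) ht hs
    simpa [Real.norm_eq_abs] using this

/-- Integral identity for `e`. -/
lemma FSol.inte {c : ℝ × ℝ} {u e : ℝ → ℝ} (h : d.FSol c u e) :
    ∀ t ∈ Icc (0:ℝ) 1, e t = d.e₀ + ∫ s in (0:ℝ)..t, d.Fe c (u s, e s) := by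
  intro t ht
  have key : ∫ s in (0:ℝ)..t, d.Fe c (u s, e s) = e t - e 0 := by
    apply integral_eq_sub_of_hasDeriv_right_of_le ht.1
    · exact h.ce.mono (Icc_subset_Icc_right ht.2)
    · intro x hx
      exact deriv_Ioi (h.de x ⟨le_of_lt hx.1, le_trans (le_of_lt hx.2) ht.2⟩)
        (le_of_lt hx.1) (lt_of_lt_of_le hx.2 ht.2)
    · exact (h.contFe.mono (Icc_subset_Icc_right ht.2)).intervalIntegrable_of_Icc ht.1
  rw [key, h.1.2.1]; ring

/-- Integral identity for `u`. -/
lemma FSol.intu {c : ℝ × ℝ} {u e : ℝ → ℝ} (h : d.FSol c u e) :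
    ∀ a b : ℝ, 0 ≤ a → a ≤ b → b ≤ 1 →
      u b = u a + ∫ s in a..b, d.Fu c (u s, e s) := by
  intro a b ha hab hb
  have hsub : Icc a b ⊆ Icc 0 1 := Icc_subset_Icc ha hb
  have key : ∫ s in a..b, d.Fu c (u s, e s) = u b - u a := by
    apply integral_eq_sub_of_hasDeriv_right_of_le hab (h.cu.mono hsub)
    · intro x hx
      exact deriv_Ioi (h.du x (hsub ⟨le_of_lt hx.1, le_of_lt hx.2⟩))
        (le_trans ha (le_of_lt hx.1)) (lt_of_lt_of_le hx.2 hb)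
    · exact (h.contFu.mono hsub).intervalIntegrable_of_Icc hab
  rw [key]; ring

/-- Feasible solutions give `PSol`s. -/
lemma FSol.psol {c : ℝ × ℝ} {u e : ℝ → ℝ} (h : d.FSol c u e) : d.PSol c u e := by
  refine ⟨h.cu, h.ce, h.1.1, h.1.2.1, fun t ht => ?_, fun t ht => h.2 t (Ico_subset_Icc_self ht)⟩
  constructor
  · exact deriv_Ici (h.du t (Ico_subset_Icc_self ht)) ht.1 ht.2
  · exact deriv_Ici (h.de t (Ico_subset_Icc_self ht)) ht.1 ht.2

variable (d)

/- ### Limit objects -/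

structure Mem (c : ℝ × ℝ) (u e : ℝ → ℝ) : Prop where
  cu : ContinuousOn u (Icc 0 1)
  ce : ContinuousOn e (Icc 0 1)
  u0 : u 0 = d.u₀
  e0 : e 0 = d.e₀
  unn : ∀ t ∈ Icc (0:ℝ) 1, 0 ≤ u t
  enn : ∀ t ∈ Icc (0:ℝ) 1, 0 ≤ e t
  low : ∀ t ∈ Icc (0:ℝ) 1, min d.u₀ (d.κc * e t) ≤ u t
  inte : ∀ t ∈ Icc (0:ℝ) 1, e t = d.e₀ + ∫ s in (0:ℝ)..t, d.Fe c (u s, e s)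
  intu : ∀ a b : ℝ, 0 ≤ a → a ≤ b → b ≤ 1 → (∀ s ∈ Icc a b, 0 < u s) →
      u b = u a + ∫ s in a..b, d.Fu c (u s, e s)

variable {d}

/-- Clamping to an interval. -/
def clamp (a b t : ℝ) : ℝ := max a (min b t)

lemma clamp_mem {a b : ℝ} (hab : a ≤ b) (t : ℝ) : clamp a b t ∈ Icc a b :=
  ⟨le_max_left _ _, max_le hab (min_le_left _ _)⟩

lemma clamp_eq {a b t : ℝ} (ht : t ∈ Icc a b) : clamp a b t = t := by
  unfold clamp; rw [min_eq_right ht.2, max_eq_right ht.1]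

lemma continuous_clamp (a b : ℝ) : Continuous (clamp a b) :=
  continuous_const.max (continuous_const.min continuous_id)

/-- The antiderivative identity for `e`, with globally continuous integrand. -/
lemma Mem.keyE {c : ℝ × ℝ} {u e : ℝ → ℝ} (m : d.Mem c u e) :
    ∃ G : ℝ → ℝ, Continuous G ∧ (∀ s ∈ Icc (0:ℝ) 1, G s = d.Fe c (u s, e s)) ∧
      ∀ x ∈ Icc (0:ℝ) 1, e x = d.e₀ + ∫ s in (0:ℝ)..x, G s := by
  have hucc : Continuous (fun s => u (clamp 0 1 s)) :=
    m.cu.comp_continuous (continuous_clamp 0 1) (fun x => clamp_mem zero_le_one x)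
  have hecc : Continuous (fun s => e (clamp 0 1 s)) :=
    m.ce.comp_continuous (continuous_clamp 0 1) (fun x => clamp_mem zero_le_one x)
  refine ⟨fun s => d.Fe c (u (clamp 0 1 s), e (clamp 0 1 s)), ?_, ?_, ?_⟩
  · apply Continuous.mul continuous_const
    exact ((continuous_const.sub (continuous_const.mul hucc)).sub
      ((hucc.pow 2).div_const 2)).add hecc
  · intro s hs; dsimp only; rw [clamp_eq hs]
  · intro x hx
    rw [m.inte x hx]
    congr 1
    apply intervalIntegral.integral_congr
    intro s hs
    have hs' : s ∈ Icc (0:ℝ) 1 := by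
      rw [uIcc_of_le hx.1] at hs
      exact ⟨hs.1, le_trans hs.2 hx.2⟩
    dsimp only; rw [clamp_eq hs']

/-- Interior derivative of `e` for a limit object. -/
lemma Mem.hasDerivAt_e {c : ℝ × ℝ} {u e : ℝ → ℝ} (m : d.Mem c u e) :
    ∀ t ∈ Ioo (0:ℝ) 1, HasDerivAt e (d.Fe c (u t, e t)) t := by
  obtain ⟨G, hGc, hGeq, hid⟩ := m.keyE
  intro t ht
  have hI : HasDerivAt (fun x => d.e₀ + ∫ s in (0:ℝ)..x, G s) (G t) t :=
    (intervalIntegral.integral_hasDerivAt_right (hGc.intervalIntegrable 0 t)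
      (hGc.stronglyMeasurable.stronglyMeasurableAtFilter) hGc.continuousAt).const_add _
  have heq : e =ᶠ[𝓝 t] fun x => d.e₀ + ∫ s in (0:ℝ)..x, G s := by
    filter_upwards [Icc_mem_nhds ht.1 ht.2] with x hx using hid x hx
  have := hI.congr_of_eventuallyEq heq
  rwa [hGeq t (Ioo_subset_Icc_self ht)] at this

/-- One-sided derivative of `e` for a limit object. -/
lemma Mem.hasDerivWithinAt_e {c : ℝ × ℝ} {u e : ℝ → ℝ} (m : d.Mem c u e) :
    ∀ t ∈ Ico (0:ℝ) 1, HasDerivWithinAt e (d.Fe c (u t, e t)) (Ici t) t := by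
  obtain ⟨G, hGc, hGeq, hid⟩ := m.keyE
  intro t ht
  have hI : HasDerivAt (fun x => d.e₀ + ∫ s in (0:ℝ)..x, G s) (G t) t :=
    (intervalIntegral.integral_hasDerivAt_right (hGc.intervalIntegrable 0 t)
      (hGc.stronglyMeasurable.stronglyMeasurableAtFilter) hGc.continuousAt).const_add _
  have hI2 : HasDerivWithinAt e (G t) (Icc t 1) t := by
    refine (hI.hasDerivWithinAt.congr ?_ ?_)
    · intro x hx; exact hid x ⟨le_trans ht.1 hx.1, hx.2⟩
    · exact hid t (Ico_subset_Icc_self ht)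
  have hmem : Icc t 1 ∈ 𝓝[Ici t] t := by
    rw [← Ici_inter_Iic]
    exact inter_mem self_mem_nhdsWithin (mem_nhdsWithin_of_mem_nhds (Iic_mem_nhds ht.2))
  have := hI2.mono_of_mem_nhdsWithin hmem
  rwa [hGeq t (Ico_subset_Icc_self ht)] at this

/-- The antiderivative identity for `u` on positivity intervals. -/
lemma Mem.keyU {c : ℝ × ℝ} {u e : ℝ → ℝ} (m : d.Mem c u e) {a b : ℝ}
    (ha : 0 ≤ a) (hab : a ≤ b) (hb : b ≤ 1) (hpos : ∀ s ∈ Icc a b, 0 < u s) :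
    ∃ H : ℝ → ℝ, Continuous H ∧ (∀ s ∈ Icc a b, H s = d.Fu c (u s, e s)) ∧
      ∀ x ∈ Icc a b, u x = u a + ∫ s in a..x, H s := by
  have hucc : Continuous (fun s => u (clamp a b s)) :=
    m.cu.mono (Icc_subset_Icc ha hb) |>.comp_continuous (continuous_clamp a b)
      (fun x => clamp_mem hab x)
  have hecc : Continuous (fun s => e (clamp a b s)) :=
    m.ce.mono (Icc_subset_Icc ha hb) |>.comp_continuous (continuous_clamp a b)
      (fun x => clamp_mem hab x)
  refine ⟨fun s => d.Fu c (u (clamp a b s), e (clamp a b s)), ?_, ?_, ?_⟩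
  · apply Continuous.mul continuous_const
    exact (continuous_const.add hucc).add
      ((continuous_const.mul hecc).div hucc (fun s => (hpos _ (clamp_mem hab s)).ne'))
  · intro s hs; dsimp only; rw [clamp_eq hs]
  · intro x hx
    rw [m.intu a x ha hx.1 (le_trans hx.2 hb)
      (fun s hs => hpos s ⟨hs.1, le_trans hs.2 hx.2⟩)]
    congr 1
    apply intervalIntegral.integral_congr
    intro s hs
    have hs' : s ∈ Icc a b := by
      rw [uIcc_of_le hx.1] at hs
      exact ⟨hs.1, le_trans hs.2 hx.2⟩
    dsimp only; rw [clamp_eq hs']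

/-- Interior derivative of `u` on positivity intervals. -/
lemma Mem.hasDerivAt_u {c : ℝ × ℝ} {u e : ℝ → ℝ} (m : d.Mem c u e) {a b : ℝ}
    (ha : 0 ≤ a) (hab : a ≤ b) (hb : b ≤ 1) (hpos : ∀ s ∈ Icc a b, 0 < u s) :
    ∀ t ∈ Ioo a b, HasDerivAt u (d.Fu c (u t, e t)) t := by
  obtain ⟨H, hHc, hHeq, hid⟩ := m.keyU ha hab hb hpos
  intro t ht
  have hI : HasDerivAt (fun x => u a + ∫ s in a..x, H s) (H t) t :=
    (intervalIntegral.integral_hasDerivAt_right (hHc.intervalIntegrable a t)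
      (hHc.stronglyMeasurable.stronglyMeasurableAtFilter) hHc.continuousAt).const_add _
  have heq : u =ᶠ[𝓝 t] fun x => u a + ∫ s in a..x, H s := by
    filter_upwards [Icc_mem_nhds ht.1 ht.2] with x hx using hid x hx
  have := hI.congr_of_eventuallyEq heq
  rwa [hHeq t (Ioo_subset_Icc_self ht)] at this

/-- One-sided derivative of `u` on positivity intervals. -/
lemma Mem.hasDerivWithinAt_u {c : ℝ × ℝ} {u e : ℝ → ℝ} (m : d.Mem c u e) {a b : ℝ}
    (ha : 0 ≤ a) (hab : a ≤ b) (hb : b ≤ 1) (hpos : ∀ s ∈ Icc a b, 0 < u s) :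
    ∀ t ∈ Ico a b, HasDerivWithinAt u (d.Fu c (u t, e t)) (Ici t) t := by
  obtain ⟨H, hHc, hHeq, hid⟩ := m.keyU ha hab hb hpos
  intro t ht
  have hI : HasDerivAt (fun x => u a + ∫ s in a..x, H s) (H t) t :=
    (intervalIntegral.integral_hasDerivAt_right (hHc.intervalIntegrable a t)
      (hHc.stronglyMeasurable.stronglyMeasurableAtFilter) hHc.continuousAt).const_add _
  have hI2 : HasDerivWithinAt u (H t) (Icc t b) t := by
    refine (hI.hasDerivWithinAt.congr ?_ ?_)
    · intro x hx; exact hid x ⟨le_trans ht.1 hx.1, hx.2⟩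
    · exact hid t (Ico_subset_Icc_self ht)
  have hmem : Icc t b ∈ 𝓝[Ici t] t := by
    rw [← Ici_inter_Iic]
    exact inter_mem self_mem_nhdsWithin (mem_nhdsWithin_of_mem_nhds (Iic_mem_nhds ht.2))
  have := hI2.mono_of_mem_nhdsWithin hmem
  rwa [hHeq t (Ico_subset_Icc_self ht)] at this

/- ### Lipschitz bound for the field -/

set_option maxHeartbeats 1000000 in
lemma field_lipschitz (c : ℝ × ℝ) {δ P : ℝ} (hδ : 0 < δ) (hP : 0 < P) :
    ∃ K : NNReal, LipschitzOnWith K (fun p : ℝ × ℝ => (d.Fu c p, d.Fe c p))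
      (Icc δ P ×ˢ Icc (-P) P) := by
  have hk1 := d.k1_pos; have hk2 := d.k2_pos; have hΓ := d.hΓ
  set KK : ℝ := max (d.k1 * (1 + 2 * d.Γ * P / δ^2)) (d.k2 * (|c.1| + P + 1)) with hKKdef
  have hKK0 : 0 ≤ KK := le_trans (by positivity) (le_max_left _ _)
  refine ⟨Real.toNNReal KK, ?_⟩
  rw [lipschitzOnWith_iff_dist_le_mul]
  rintro p hp q hq
  have hp1 : δ ≤ p.1 ∧ p.1 ≤ P := ⟨hp.1.1, hp.1.2⟩
  have hp2 : |p.2| ≤ P := abs_le.2 ⟨hp.2.1, hp.2.2⟩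
  have hq1 : δ ≤ q.1 ∧ q.1 ≤ P := ⟨hq.1.1, hq.1.2⟩
  have hq2 : |q.2| ≤ P := abs_le.2 ⟨hq.2.1, hq.2.2⟩
  have hp1p : 0 < p.1 := lt_of_lt_of_le hδ hp1.1
  have hq1p : 0 < q.1 := lt_of_lt_of_le hδ hq1.1
  simp only [Prod.dist_eq, Real.dist_eq, Real.coe_toNNReal _ hKK0]
  set D1 := |p.1 - q.1| with hD1def
  set D2 := |p.2 - q.2| with hD2def
  have hD1nn : 0 ≤ D1 := abs_nonneg _
  have hD2nn : 0 ≤ D2 := abs_nonneg _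
  have hD1 : D1 ≤ max D1 D2 := le_max_left _ _
  have hD2 : D2 ≤ max D1 D2 := le_max_right _ _
  have hDM0 : 0 ≤ max D1 D2 := le_trans hD1nn hD1
  have hq1abs : |q.1| ≤ P := abs_le.2 ⟨by linarith, hq1.2⟩
  have hFe : |d.Fe c p - d.Fe c q| ≤ d.k2 * (|c.1| + P + 1) * max D1 D2 := by
    have expand : d.Fe c p - d.Fe c q
        = d.k2 * (-(c.1 * (p.1 - q.1)) + -((p.1 + q.1) * (p.1 - q.1) / 2) + (p.2 - q.2)) := by
      unfold Fe; ring
    rw [expand, abs_mul, abs_of_pos hk2]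
    have tri := abs_add_three (-(c.1 * (p.1 - q.1))) (-((p.1 + q.1) * (p.1 - q.1) / 2))
      (p.2 - q.2)
    have t1 : |c.1 * (p.1 - q.1)| ≤ |c.1| * max D1 D2 := by
      rw [abs_mul]
      exact mul_le_mul_of_nonneg_left (le_trans (le_of_eq rfl) hD1) (abs_nonneg _)
    have t2 : |(p.1 + q.1) * (p.1 - q.1) / 2| ≤ P * max D1 D2 := by
      rw [abs_div, abs_mul]
      have hs : |p.1 + q.1| ≤ 2 * P := by
        rw [abs_of_pos (by linarith : (0:ℝ) < p.1 + q.1)]; linarith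
      have : |p.1 + q.1| * |p.1 - q.1| ≤ 2 * P * max D1 D2 := by
        apply mul_le_mul hs (le_trans (le_of_eq rfl) hD1) hD1nn (by positivity)
      calc |p.1 + q.1| * |p.1 - q.1| / |2| = |p.1 + q.1| * |p.1 - q.1| / 2 := by norm_num
        _ ≤ 2 * P * max D1 D2 / 2 := by linarith
        _ = P * max D1 D2 := by ring
    rw [abs_neg, abs_neg] at tri
    have hsum : |(-(c.1 * (p.1 - q.1)) + -((p.1 + q.1) * (p.1 - q.1) / 2) + (p.2 - q.2))|
        ≤ (|c.1| + P + 1) * max D1 D2 := by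
      have : |p.2 - q.2| ≤ max D1 D2 := hD2
      nlinarith [tri, t1, t2]
    calc d.k2 * |(-(c.1 * (p.1 - q.1)) + -((p.1 + q.1) * (p.1 - q.1) / 2) + (p.2 - q.2))|
        ≤ d.k2 * ((|c.1| + P + 1) * max D1 D2) := by
          exact mul_le_mul_of_nonneg_left hsum (le_of_lt hk2)
      _ = d.k2 * (|c.1| + P + 1) * max D1 D2 := by ring
  have hFu : |d.Fu c p - d.Fu c q| ≤ d.k1 * (1 + 2 * d.Γ * P / δ^2) * max D1 D2 := by
    have hdiv : p.2 / p.1 - q.2 / q.1 = ((p.2 - q.2) * q.1 + q.2 * (q.1 - p.1)) / (p.1 * q.1) := by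
      field_simp
      ring
    have hnum : |(p.2 - q.2) * q.1 + q.2 * (q.1 - p.1)| ≤ P * D2 + P * D1 := by
      have a1 : |(p.2 - q.2) * q.1| ≤ D2 * P := by
        rw [abs_mul]; exact mul_le_mul_of_nonneg_left hq1abs hD2nn
      have a2 : |q.2 * (q.1 - p.1)| ≤ P * D1 := by
        rw [abs_mul, abs_sub_comm]
        exact mul_le_mul hq2 le_rfl (abs_nonneg _) (le_of_lt hP)
      calc |(p.2 - q.2) * q.1 + q.2 * (q.1 - p.1)| ≤ |(p.2 - q.2) * q.1| + |q.2 * (q.1 - p.1)| :=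
            abs_add_le _ _
        _ ≤ P * D2 + P * D1 := by nlinarith
    have hden : δ^2 ≤ |p.1 * q.1| := by
      rw [abs_of_pos (mul_pos hp1p hq1p)]
      nlinarith [hp1.1, hq1.1]
    have hfrac : |p.2 / p.1 - q.2 / q.1| ≤ (P * D2 + P * D1) / δ^2 := by
      rw [hdiv, abs_div]
      exact div_le_div₀ (by positivity) hnum (by positivity) hden
    have expand : d.Fu c p - d.Fu c q
        = d.k1 * ((p.1 - q.1) + d.Γ * (p.2 / p.1 - q.2 / q.1)) := by
      unfold Fu; ring
    rw [expand, abs_mul, abs_of_pos hk1]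
    have hin : |(p.1 - q.1) + d.Γ * (p.2 / p.1 - q.2 / q.1)|
        ≤ (1 + 2 * d.Γ * P / δ^2) * max D1 D2 := by
      have tri := abs_add_le (p.1 - q.1) (d.Γ * (p.2 / p.1 - q.2 / q.1))
      have t2 : |d.Γ * (p.2 / p.1 - q.2 / q.1)| ≤ d.Γ * ((P * D2 + P * D1) / δ^2) := by
        rw [abs_mul, abs_of_pos hΓ]
        exact mul_le_mul_of_nonneg_left hfrac (le_of_lt hΓ)
      have hδ2 : (0:ℝ) < δ^2 := by positivity
      have hfr : (P * D2 + P * D1) / δ^2 ≤ 2 * P * max D1 D2 / δ^2 := by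
        have hnumle : P * D2 + P * D1 ≤ 2 * P * max D1 D2 := by nlinarith
        exact div_le_div₀ (by positivity) hnumle hδ2 le_rfl
      calc |(p.1 - q.1) + d.Γ * (p.2 / p.1 - q.2 / q.1)|
          ≤ D1 + d.Γ * ((P * D2 + P * D1) / δ^2) := tri.trans (add_le_add le_rfl t2)
        _ ≤ max D1 D2 + d.Γ * (2 * P * max D1 D2 / δ^2) :=
            add_le_add hD1 (mul_le_mul_of_nonneg_left hfr (le_of_lt hΓ))
        _ = (1 + 2 * d.Γ * P / δ^2) * max D1 D2 := by ring
    calc d.k1 * |(p.1 - q.1) + d.Γ * (p.2 / p.1 - q.2 / q.1)|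
        ≤ d.k1 * ((1 + 2 * d.Γ * P / δ^2) * max D1 D2) :=
          mul_le_mul_of_nonneg_left hin (le_of_lt hk1)
      _ = d.k1 * (1 + 2 * d.Γ * P / δ^2) * max D1 D2 := by ring
  apply max_le
  · exact hFu.trans (mul_le_mul_of_nonneg_right (le_max_left _ _) hDM0)
  · exact hFe.trans (mul_le_mul_of_nonneg_right (le_max_right _ _) hDM0)

/- ### Local uniqueness -/

/-- Two solutions (in one-sided-derivative form) which are positive on `[0, b]` agree there. -/
lemma agree {c : ℝ × ℝ} {u1 e1 u2 e2 : ℝ → ℝ} {b : ℝ} (hb0 : 0 ≤ b) (hb1 : b ≤ 1)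
    (hcu1 : ContinuousOn u1 (Icc 0 b)) (hce1 : ContinuousOn e1 (Icc 0 b))
    (hcu2 : ContinuousOn u2 (Icc 0 b)) (hce2 : ContinuousOn e2 (Icc 0 b))
    (hd1 : ∀ t ∈ Ico (0:ℝ) b, HasDerivWithinAt u1 (d.Fu c (u1 t, e1 t)) (Ici t) t ∧
      HasDerivWithinAt e1 (d.Fe c (u1 t, e1 t)) (Ici t) t)
    (hd2 : ∀ t ∈ Ico (0:ℝ) b, HasDerivWithinAt u2 (d.Fu c (u2 t, e2 t)) (Ici t) t ∧
      HasDerivWithinAt e2 (d.Fe c (u2 t, e2 t)) (Ici t) t)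
    (hp1 : ∀ t ∈ Icc (0:ℝ) b, 0 < u1 t) (hp2 : ∀ t ∈ Icc (0:ℝ) b, 0 < u2 t)
    (h0u : u1 0 = u2 0) (h0e : e1 0 = e2 0) :
    ∀ t ∈ Icc (0:ℝ) b, u1 t = u2 t ∧ e1 t = e2 t := by
  have hne : (Icc (0:ℝ) b).Nonempty := nonempty_Icc.2 hb0
  obtain ⟨t1, ht1, hmin1⟩ := isCompact_Icc.exists_isMinOn hne hcu1
  obtain ⟨t2, ht2, hmin2⟩ := isCompact_Icc.exists_isMinOn hne hcu2
  set δ := min (u1 t1) (u2 t2) with hδdef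
  have hδ : 0 < δ := lt_min (hp1 t1 ht1) (hp2 t2 ht2)
  obtain ⟨C1, hC1⟩ := isCompact_Icc.exists_bound_of_continuousOn hcu1
  obtain ⟨C2, hC2⟩ := isCompact_Icc.exists_bound_of_continuousOn hcu2
  obtain ⟨C3, hC3⟩ := isCompact_Icc.exists_bound_of_continuousOn hce1
  obtain ⟨C4, hC4⟩ := isCompact_Icc.exists_bound_of_continuousOn hce2
  set P := max (max (max C1 C2) (max C3 C4)) δ + 1 with hPdef
  have hPpos : 0 < P := by
    have : δ ≤ max (max (max C1 C2) (max C3 C4)) δ := le_max_right _ _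
    nlinarith
  have hmemP : ∀ t ∈ Icc (0:ℝ) b,
      (u1 t, e1 t) ∈ Icc δ P ×ˢ Icc (-P) P ∧ (u2 t, e2 t) ∈ Icc δ P ×ˢ Icc (-P) P := by
    intro t ht
    have b1 := hC1 t ht; have b2 := hC2 t ht; have b3 := hC3 t ht; have b4 := hC4 t ht
    rw [Real.norm_eq_abs, abs_le] at b1 b2 b3 b4
    have l1 : δ ≤ u1 t := le_trans (min_le_left _ _) (hmin1 ht)
    have l2 : δ ≤ u2 t := le_trans (min_le_right _ _) (hmin2 ht)
    have m1 : C1 ≤ P - 1 := by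
      have : C1 ≤ max (max (max C1 C2) (max C3 C4)) δ :=
        le_trans (le_trans (le_max_left _ _) (le_max_left _ _)) (le_max_left _ _)
      linarith
    have m2 : C2 ≤ P - 1 := by
      have : C2 ≤ max (max (max C1 C2) (max C3 C4)) δ :=
        le_trans (le_trans (le_max_right _ _) (le_max_left _ _)) (le_max_left _ _)
      linarith
    have m3 : C3 ≤ P - 1 := by
      have : C3 ≤ max (max (max C1 C2) (max C3 C4)) δ :=
        le_trans (le_trans (le_max_left _ _) (le_max_right _ _)) (le_max_left _ _)
      linarith
    have m4 : C4 ≤ P - 1 := by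
      have : C4 ≤ max (max (max C1 C2) (max C3 C4)) δ :=
        le_trans (le_trans (le_max_right _ _) (le_max_right _ _)) (le_max_left _ _)
      linarith
    refine ⟨⟨⟨l1, by linarith⟩, ⟨by linarith, by linarith⟩⟩,
      ⟨⟨l2, by linarith⟩, ⟨by linarith, by linarith⟩⟩⟩
  obtain ⟨K, hK⟩ := d.field_lipschitz c hδ hPpos
  have key := ODE_solution_unique_of_mem_Icc_right
    (v := fun _ : ℝ => fun p : ℝ × ℝ => (d.Fu c p, d.Fe c p))
    (s := fun _ : ℝ => Icc δ P ×ˢ Icc (-P) P) (K := K) (fun _ _ => hK)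
    (f := fun t => (u1 t, e1 t)) (g := fun t => (u2 t, e2 t)) (a := 0) (b := b)
    (hcu1.prodMk hce1)
    (fun t ht => ((hd1 t ht).1.prodMk (hd1 t ht).2))
    (fun t ht => (hmemP t (Ico_subset_Icc_self ht)).1)
    (hcu2.prodMk hce2)
    (fun t ht => ((hd2 t ht).1.prodMk (hd2 t ht).2))
    (fun t ht => (hmemP t (Ico_subset_Icc_self ht)).2)
    (by simp [h0u, h0e])
  intro t ht
  have := key ht
  simpa [Prod.ext_iff] using this

/- ### First zero of `e` -/

def fz (e : ℝ → ℝ) : ℝ := sInf ({t ∈ Icc (0:ℝ) 1 | e t = 0} ∪ {1})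

section fzsec

variable {c : ℝ × ℝ} {u e : ℝ → ℝ}

lemma fz_bddBelow : BddBelow ({t ∈ Icc (0:ℝ) 1 | e t = 0} ∪ {1}) := by
  refine ⟨0, ?_⟩
  rintro x (hx | hx)
  · exact hx.1.1
  · simp only [mem_singleton_iff] at hx; rw [hx]; norm_num

lemma fz_ne : ({t ∈ Icc (0:ℝ) 1 | e t = 0} ∪ {1} : Set ℝ).Nonempty :=
  ⟨1, Or.inr rfl⟩

lemma fz_closed (m : d.Mem c u e) : IsClosed ({t ∈ Icc (0:ℝ) 1 | e t = 0} ∪ {1} : Set ℝ) := by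
  apply IsClosed.union _ isClosed_singleton
  have : {t ∈ Icc (0:ℝ) 1 | e t = 0} = Icc (0:ℝ) 1 ∩ e ⁻¹' {0} := by
    ext x; simp [mem_setOf_eq]
  rw [this]
  exact m.ce.preimage_isClosed_of_isClosed isClosed_Icc isClosed_singleton

lemma fz_mem (m : d.Mem c u e) : fz e ∈ Icc (0:ℝ) 1 := by
  constructor
  · apply le_csInf fz_ne
    rintro x (hx | hx)
    · exact hx.1.1
    · simp only [mem_singleton_iff] at hx; rw [hx]; norm_num
  · exact csInf_le fz_bddBelow (Or.inr rfl)

lemma fz_in (m : d.Mem c u e) : fz e ∈ ({t ∈ Icc (0:ℝ) 1 | e t = 0} ∪ {1} : Set ℝ) :=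
  (fz_closed m).csInf_mem fz_ne fz_bddBelow

lemma fz_zero (m : d.Mem c u e) (h : fz e < 1) : e (fz e) = 0 := by
  rcases fz_in m with hx | hx
  · exact hx.2
  · simp only [mem_singleton_iff] at hx; rw [hx] at h; exact absurd h (lt_irrefl _)

lemma fz_pos (m : d.Mem c u e) : 0 < fz e := by
  rcases lt_or_ge 0 (fz e) with h | h
  · exact h
  · exfalso
    have h0 : fz e = 0 := le_antisymm h (fz_mem m).1
    have := fz_zero m (by rw [h0]; norm_num)
    rw [h0, m.e0] at this
    exact absurd this (ne_of_gt d.he0)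

lemma fz_lt_pos (m : d.Mem c u e) :
    ∀ t ∈ Icc (0:ℝ) 1, t < fz e → 0 < e t := by
  intro t ht hlt
  rcases lt_or_ge 0 (e t) with h | h
  · exact h
  · exfalso
    have he0 : e t = 0 := le_antisymm h (m.enn t ht)
    have : fz e ≤ t := csInf_le fz_bddBelow (Or.inl ⟨ht, he0⟩)
    exact absurd hlt (not_lt.2 this)

lemma Mem.upos (m : d.Mem c u e) :
    ∀ t ∈ Icc (0:ℝ) 1, 0 < e t → 0 < u t := by
  intro t ht het
  exact lt_of_lt_of_le (lt_min d.hu0 (mul_pos d.κc_pos het)) (m.low t ht)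

end fzsec

/- ### The boundary case analysis -/

lemma Mem.isLocalMin_e {c : ℝ × ℝ} {u e : ℝ → ℝ} (m : d.Mem c u e) {σ : ℝ}
    (hσ : σ ∈ Ioo (0:ℝ) 1) (hez : e σ = 0) : IsLocalMin e σ := by
  have : ∀ᶠ x in 𝓝 σ, e σ ≤ e x := by
    filter_upwards [Icc_mem_nhds hσ.1 hσ.2] with x hx
    rw [hez]; exact m.enn x hx
  exact this

set_option maxHeartbeats 1000000 in
lemma no_interior_touch {c : ℝ × ℝ} {u e : ℝ → ℝ} (m : d.Mem c u e) {σ : ℝ}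
    (hσ : σ ∈ Ioo (0:ℝ) 1) (hez : e σ = 0) (hepos : ∀ t ∈ Ico (0:ℝ) σ, 0 < e t)
    (ha : 0 < u σ) : False := by
  have hσm : σ ∈ Icc (0:ℝ) 1 := Ioo_subset_Icc_self hσ
  have hucont : ContinuousAt u σ := m.cu.continuousAt (Icc_mem_nhds hσ.1 hσ.2)
  have h1 : ∀ᶠ x in 𝓝 σ, u σ / 2 < u x :=
    hucont.eventually (eventually_gt_nhds (by linarith))
  have h2 : ∀ᶠ x in 𝓝 σ, (u σ / 2 < u x ∧ x ∈ Ioo (0:ℝ) 1) :=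
    h1.and (isOpen_Ioo.eventually_mem hσ)
  obtain ⟨ε, hε, hball⟩ := Metric.eventually_nhds_iff.1 h2
  set h₀ := ε / 2 with hh₀def
  have hh₀ : 0 < h₀ := by positivity
  have hJ : ∀ x ∈ Icc (σ - h₀) (σ + h₀), u σ / 2 < u x ∧ x ∈ Ioo (0:ℝ) 1 := by
    intro x hx
    apply hball
    rw [Real.dist_eq, abs_lt]
    constructor
    · linarith [hx.1]
    · linarith [hx.2]
  have hJl : σ - h₀ ∈ Icc (σ - h₀) (σ + h₀) := ⟨le_rfl, by linarith⟩
  have hJr : σ ∈ Icc (σ - h₀) (σ + h₀) := ⟨by linarith, by linarith⟩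
  have hJsub : Icc (σ - h₀) (σ + h₀) ⊆ Icc (0:ℝ) 1 := by
    intro x hx
    have := (hJ x hx).2
    exact ⟨this.1.le, this.2.le⟩
  have hJa : 0 ≤ σ - h₀ := (hJ _ hJl).2.1.le
  have hJb : σ + h₀ ≤ 1 := ((hJ _ ⟨by linarith, le_rfl⟩).2.2).le
  have hJpos : ∀ x ∈ Icc (σ - h₀) (σ + h₀), 0 < u x := fun x hx =>
    lt_trans (by linarith) (hJ x hx).1
  -- derivative of u at σ
  have hu : HasDerivAt u (d.Fu c (u σ, e σ)) σ :=
    m.hasDerivAt_u hJa (by linarith) hJb hJpos σ ⟨by linarith, by linarith⟩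
  have he : HasDerivAt e (d.Fe c (u σ, e σ)) σ := m.hasDerivAt_e σ hσ
  have hg0 : d.Fe c (u σ, e σ) = 0 :=
    (m.isLocalMin_e hσ hez).hasDerivAt_eq_zero he
  by_cases hcase : c.1 + u σ = 0
  · -- equilibrium case: time-reversed uniqueness against the constant solution
    obtain ⟨C1, hC1⟩ := isCompact_Icc.exists_bound_of_continuousOn
      (m.cu.mono hJsub)
    obtain ⟨C2, hC2⟩ := isCompact_Icc.exists_bound_of_continuousOn
      (m.ce.mono hJsub)
    set P := max C1 C2 + u σ + 1 with hPdef
    have hPpos : 0 < P := by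
      have := le_trans (abs_nonneg (u (σ - h₀))) (le_trans (le_of_eq (Real.norm_eq_abs _).symm) (hC1 _ hJl))
      have h12 : C1 ≤ max C1 C2 := le_max_left _ _
      nlinarith [ha]
    have hδP := d.field_lipschitz c (show 0 < u σ / 2 by linarith) hPpos
    obtain ⟨K, hK⟩ := hδP
    have hmem : ∀ t ∈ Icc (σ - h₀) (σ + h₀),
        (u t, e t) ∈ Icc (u σ / 2) P ×ˢ Icc (-P) P := by
      intro t ht
      have b1 := hC1 t ht
      have b2 := hC2 t ht
      rw [Real.norm_eq_abs, abs_le] at b1 b2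
      have h12 : C1 ≤ max C1 C2 := le_max_left _ _
      have h22 : C2 ≤ max C1 C2 := le_max_right _ _
      exact ⟨⟨(hJ t ht).1.le, by nlinarith [ha]⟩, ⟨by nlinarith [ha], by nlinarith [ha]⟩⟩
    have hmemc : ((u σ, (0:ℝ)) : ℝ × ℝ) ∈ Icc (u σ / 2) P ×ˢ Icc (-P) P := by
      have := hmem σ hJr
      rw [hez] at this
      exact this
    have key := ODE_solution_unique_of_mem_Icc_left
      (v := fun _ : ℝ => fun p : ℝ × ℝ => (d.Fu c p, d.Fe c p))
      (s := fun _ : ℝ => Icc (u σ / 2) P ×ˢ Icc (-P) P) (K := K) (fun _ _ => hK)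
      (f := fun t => (u t, e t)) (g := fun _ => (u σ, 0)) (a := σ - h₀) (b := σ)
      ((m.cu.mono hJsub).mono (Icc_subset_Icc le_rfl (by linarith)) |>.prodMk
        ((m.ce.mono hJsub).mono (Icc_subset_Icc le_rfl (by linarith))))
      (fun t ht => ?_) (fun t ht => hmem t ⟨ht.1.le, by linarith [ht.2]⟩)
      continuousOn_const (fun t ht => ?_) (fun t ht => hmemc)
      (by rw [hez])
    · have := key ⟨le_rfl, by linarith⟩
      have hc : e (σ - h₀) = 0 := by
        have h3 := congrArg Prod.snd this
        simpa using h3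
      have := hepos (σ - h₀) ⟨hJa, by linarith⟩
      rw [hc] at this
      exact lt_irrefl 0 this
    · -- derivative of the pair
      have htJ : t ∈ Icc (σ - h₀) (σ + h₀) := ⟨ht.1.le, by linarith [ht.2]⟩
      have htIoo : t ∈ Ioo (0:ℝ) 1 := (hJ t htJ).2
      have hut : HasDerivAt u (d.Fu c (u t, e t)) t := by
        rcases lt_or_eq_of_le ht.2 with hlt | heqt
        · exact m.hasDerivAt_u hJa (by linarith) hJb hJpos t ⟨ht.1, by linarith⟩
        · rw [heqt]; exact hu
      have het : HasDerivAt e (d.Fe c (u t, e t)) t := m.hasDerivAt_e t htIoo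
      exact (hut.prodMk het).hasDerivWithinAt
    · -- derivative of the constant
      have hFu0 : d.Fu c (u σ, 0) = 0 := by
        unfold Fu
        rw [mul_zero, zero_div, add_zero, hcase, mul_zero]
      have hFe0 : d.Fe c (u σ, 0) = 0 := by
        have hd : d.Fe c (u σ, 0) = d.Fe c (u σ, e σ) - d.k2 * e σ := by
          unfold Fe; ring
        rw [hd, hg0, hez]; ring
      have hcd : HasDerivWithinAt (fun _ : ℝ => ((u σ, (0:ℝ)) : ℝ × ℝ)) 0 (Iic t) t :=
        hasDerivWithinAt_const _ _ _
      exact hcd.congr_deriv (by rw [Prod.ext_iff]; exact ⟨hFu0.symm, hFe0.symm⟩)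
  · -- non-degenerate case: second derivative argument
    set Du := d.Fu c (u σ, e σ) with hDudef
    have hDu : Du = d.k1 * (c.1 + u σ) := by
      rw [hDudef]; unfold Fu; rw [hez, mul_zero, zero_div, add_zero]
    have hG : HasDerivAt (fun t => d.Fe c (u t, e t))
        (d.k2 * ((0 - c.1 * Du) - (2 * u σ ^ 1 * Du)/2 + d.Fe c (u σ, e σ))) σ := by
      have hi : HasDerivAt (fun t => c.2 - c.1 * u t - (u t)^2/2 + e t)
          ((0 - c.1 * Du) - (2 * u σ ^ 1 * Du)/2 + d.Fe c (u σ, e σ)) σ := by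
        have h1 := (hasDerivAt_const σ c.2).sub (hu.const_mul c.1)
        have h2 := h1.sub ((hu.pow 2).div_const 2)
        have h3 := h2.add he
        exact h3.congr_deriv (by norm_num)
      exact hi.const_mul _
    set AG := d.k2 * ((0 - c.1 * Du) - (2 * u σ ^ 1 * Du)/2 + d.Fe c (u σ, e σ)) with hAGdef
    have hAGneg : AG < 0 := by
      rw [hAGdef, hg0, hDu]
      have hk1 := d.k1_pos; have hk2 := d.k2_pos
      have hrw : (0 - c.1 * (d.k1 * (c.1 + u σ)) - (2 * u σ ^ 1 * (d.k1 * (c.1 + u σ)))/2 + 0)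
          = -(d.k1 * (c.1 + u σ)^2) := by ring
      rw [hrw]
      have hsq : 0 < (c.1 + u σ)^2 := by positivity
      nlinarith [mul_pos hk2 (mul_pos hk1 hsq)]
    have hslope := hasDerivAt_iff_tendsto_slope.1 hG
    have hhalf : AG < AG / 2 := by linarith
    have hsl : ∀ᶠ s in 𝓝[≠] σ, slope (fun t => d.Fe c (u t, e t)) σ s < AG / 2 :=
      hslope.eventually (eventually_lt_nhds hhalf)
    have hle : 𝓝[Iio σ] σ ≤ 𝓝[{σ}ᶜ] σ :=
      nhdsWithin_mono σ (fun x hx => ne_of_lt hx)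
    have hsl2 : ∀ᶠ s in 𝓝[<] σ, slope (fun t => d.Fe c (u t, e t)) σ s < AG / 2 :=
      hsl.filter_mono hle
    obtain ⟨l, hl, hsub⟩ := mem_nhdsLT_iff_exists_Ioo_subset.1 hsl2
    set l' := max l (σ - h₀) with hl'def
    have hl'lt : l' < σ := max_lt hl (by linarith)
    set l'' := (l' + σ)/2 with hl''def
    have hl''lt : l'' < σ := by rw [hl''def]; linarith
    have hl''gt : l' < l'' := by rw [hl''def]; linarith
    have hl''pos : 0 < l'' := by
      have : σ - h₀ ≤ l' := le_max_right _ _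
      rw [hl''def]
      have := hσ.1
      nlinarith [hJa]
    have hGpos : ∀ s ∈ Ioo l'' σ, 0 < d.Fe c (u s, e s) := by
      intro s hs
      have hsmem : s ∈ Ioo l σ :=
        ⟨lt_trans (lt_of_le_of_lt (le_max_left _ _) hl''gt) hs.1, hs.2⟩
      have hslope_s : slope (fun t => d.Fe c (u t, e t)) σ s < AG / 2 := hsub hsmem
      rw [slope_def_field] at hslope_s
      rw [hg0] at hslope_s
      have hden : s - σ < 0 := by linarith [hs.2]
      have hexpand : d.Fe c (u s, e s)
          = ((d.Fe c (u s, e s) - 0) / (s - σ)) * (s - σ) := by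
        rw [sub_zero, div_mul_cancel₀ _ hden.ne]
      rw [hexpand]
      nlinarith [hslope_s, hAGneg, hden]
    have hemono : StrictMonoOn e (Icc l'' σ) := by
      apply strictMonoOn_of_hasDerivWithinAt_pos (convex_Icc l'' σ)
        (m.ce.mono (Icc_subset_Icc hl''pos.le hσm.2)) (f' := fun s => d.Fe c (u s, e s))
      · intro s hs
        rw [interior_Icc] at hs ⊢
        exact (m.hasDerivAt_e s ⟨lt_trans hl''pos hs.1, lt_trans hs.2 hσ.2⟩).hasDerivWithinAt
      · intro s hs
        rw [interior_Icc] at hs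
        exact hGpos s hs
    have hlt := hemono (left_mem_Icc.2 hl''lt.le) (right_mem_Icc.2 hl''lt.le) hl''lt
    have hcontr := hepos l'' ⟨hl''pos.le, hl''lt⟩
    rw [hez] at hlt
    linarith

lemma zero_cont {c : ℝ × ℝ} {u e : ℝ → ℝ} (m : d.Mem c u e) {σ : ℝ}
    (hσ : σ ∈ Ioo (0:ℝ) 1) (hez : e σ = 0) (hepos : ∀ t ∈ Ico (0:ℝ) σ, 0 < e t)
    (ha : u σ = 0) : ∀ t ∈ Icc σ 1, u t = 0 ∧ e t = 0 := by
  have hσm : σ ∈ Icc (0:ℝ) 1 := Ioo_subset_Icc_self hσ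
  have he : HasDerivAt e (d.Fe c (u σ, e σ)) σ := m.hasDerivAt_e σ hσ
  have hg0 : d.Fe c (u σ, e σ) = 0 :=
    (m.isLocalMin_e hσ hez).hasDerivAt_eq_zero he
  have hc2 : c.2 = 0 := by
    have h0 := hg0
    unfold Fe at h0
    rw [ha, hez] at h0
    have hk2 := d.k2_pos
    have : c.2 - c.1 * 0 - 0^2/2 + 0 = 0 := by
      rcases mul_eq_zero.1 h0 with h | h
      · exact absurd h hk2.ne'
      · exact h
    simpa using this
  have hc1 : 0 ≤ c.1 := by
    by_contra hneg
    push_neg at hneg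
    have hucont : ContinuousAt u σ := m.cu.continuousAt (Icc_mem_nhds hσ.1 hσ.2)
    have h1 : ∀ᶠ x in 𝓝 σ, u x < -c.1 := by
      apply hucont.eventually (eventually_lt_nhds ?_)
      rw [ha]; linarith
    have h2 : ∀ᶠ x in 𝓝 σ, (u x < -c.1 ∧ x ∈ Ioo (0:ℝ) 1) :=
      h1.and (isOpen_Ioo.eventually_mem hσ)
    obtain ⟨ε, hε, hball⟩ := Metric.eventually_nhds_iff.1 h2
    set l := σ - ε/2 with hldef
    have hlσ : l < σ := by rw [hldef]; linarith
    have hlJ : ∀ x ∈ Icc l σ, u x < -c.1 ∧ x ∈ Ioo (0:ℝ) 1 := by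
      intro x hx
      apply hball
      rw [Real.dist_eq, abs_lt]
      constructor
      · rw [hldef] at hx; linarith [hx.1]
      · linarith [hx.2, hε]
    have hl0 : 0 < l := (hlJ l (left_mem_Icc.2 hlσ.le)).2.1
    have hmono : MonotoneOn e (Icc l σ) := by
      apply monotoneOn_of_hasDerivWithinAt_nonneg (convex_Icc l σ)
        (m.ce.mono (Icc_subset_Icc hl0.le hσm.2)) (f' := fun s => d.Fe c (u s, e s))
      · intro s hs
        rw [interior_Icc] at hs ⊢
        exact (m.hasDerivAt_e s ⟨lt_trans hl0 hs.1, lt_trans hs.2 hσ.2⟩).hasDerivWithinAt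
      · intro s hs
        rw [interior_Icc] at hs
        have hs' : s ∈ Icc (0:ℝ) 1 :=
          ⟨(lt_trans hl0 hs.1).le, (lt_trans hs.2 hσ.2).le⟩
        have hus := (hlJ s (Ioo_subset_Icc_self hs)).1
        have hunn := m.unn s hs'
        have henn := m.enn s hs'
        unfold Fe
        rw [hc2]
        have hk2 := d.k2_pos
        have hin : 0 - c.1 * u s - (u s)^2/2 + e s = u s * (-c.1 - u s/2) + e s := by ring
        have hfac : 0 ≤ u s * (-c.1 - u s/2) := by nlinarith
        nlinarith
    have hle := hmono (left_mem_Icc.2 hlσ.le) (right_mem_Icc.2 hlσ.le) hlσ.le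
    rw [hez] at hle
    have := hepos l ⟨hl0.le, hlσ⟩
    linarith
  -- step: e vanishes on [σ, 1]
  have heall : ∀ t ∈ Icc σ 1, e t = 0 := by
    intro t ht
    set φ : ℝ → ℝ := fun s => e s * Real.exp (-d.k2 * s) with hφdef
    have hφanti : AntitoneOn φ (Icc σ 1) := by
      apply antitoneOn_of_hasDerivWithinAt_nonpos (convex_Icc σ 1)
        ((m.ce.mono (Icc_subset_Icc hσ.1.le le_rfl)).mul
          (Real.continuous_exp.comp (continuous_const.mul continuous_id)).continuousOn)
        (f' := fun s => d.Fe c (u s, e s) * Real.exp (-d.k2 * s)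
          + e s * (Real.exp (-d.k2 * s) * -d.k2))
      · intro s hs
        rw [interior_Icc] at hs ⊢
        have hsIoo : s ∈ Ioo (0:ℝ) 1 := ⟨lt_trans hσ.1 hs.1, hs.2⟩
        have hde := m.hasDerivAt_e s hsIoo
        have hexp : HasDerivAt (fun x : ℝ => Real.exp (-d.k2 * x))
            (Real.exp (-d.k2 * s) * -d.k2) s := by
          have hlin : HasDerivAt (fun x : ℝ => -d.k2 * x) (-d.k2) s := by
            simpa using (hasDerivAt_id s).const_mul (-d.k2)
          simpa [mul_comm] using hlin.exp
        exact ((hde.mul hexp).hasDerivWithinAt)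
      · intro s hs
        rw [interior_Icc] at hs
        have hsIoo : s ∈ Ioo (0:ℝ) 1 := ⟨lt_trans hσ.1 hs.1, hs.2⟩
        have hs' : s ∈ Icc (0:ℝ) 1 := Ioo_subset_Icc_self hsIoo
        have hunn := m.unn s hs'
        have hexp0 : (0:ℝ) < Real.exp (-d.k2 * s) := Real.exp_pos _
        have hFe : d.Fe c (u s, e s) = d.k2 * (0 - c.1 * u s - (u s)^2/2 + e s) := by
          unfold Fe; rw [hc2]
        have hk2 := d.k2_pos
        have hkey : d.Fe c (u s, e s) - d.k2 * e s ≤ 0 := by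
          rw [hFe]
          have : d.k2 * (0 - c.1 * u s - (u s)^2/2 + e s) - d.k2 * e s
              = d.k2 * (- (c.1 * u s) - (u s)^2/2) := by ring
          rw [this]
          have h1 : 0 ≤ c.1 * u s := mul_nonneg hc1 hunn
          nlinarith
        have hrw : d.Fe c (u s, e s) * Real.exp (-d.k2 * s)
            + e s * (Real.exp (-d.k2 * s) * -d.k2)
            = (d.Fe c (u s, e s) - d.k2 * e s) * Real.exp (-d.k2 * s) := by ring
        rw [hrw]
        exact mul_nonpos_of_nonpos_of_nonneg hkey hexp0.le
    have hφ : φ t ≤ φ σ := hφanti (left_mem_Icc.2 hσ.2.le) ht ht.1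
    have hφσ : φ σ = 0 := by rw [hφdef]; simp [hez]
    have hexp0 : (0:ℝ) < Real.exp (-d.k2 * t) := Real.exp_pos _
    have ht' : t ∈ Icc (0:ℝ) 1 := ⟨le_trans hσ.1.le ht.1, ht.2⟩
    have henn := m.enn t ht'
    have hφt : e t * Real.exp (-d.k2 * t) ≤ 0 := by
      rw [← hφσ]; exact hφ
    nlinarith
  -- step: u vanishes on (σ, 1)
  have hualt : ∀ t ∈ Ioo σ 1, u t = 0 := by
    intro t htt
    have htIoo : t ∈ Ioo (0:ℝ) 1 := ⟨lt_trans hσ.1 htt.1, htt.2⟩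
    have ht' : t ∈ Icc (0:ℝ) 1 := Ioo_subset_Icc_self htIoo
    have hG : HasDerivAt e (d.Fe c (u t, e t)) t := m.hasDerivAt_e t htIoo
    have hconst : HasDerivAt e 0 t := by
      apply HasDerivAt.congr_of_eventuallyEq (hasDerivAt_const t 0)
      filter_upwards [Icc_mem_nhds htt.1 htt.2] with x hx using heall x hx
    have h0 : d.Fe c (u t, e t) = 0 := hG.unique hconst
    unfold Fe at h0
    rw [heall t (Ioo_subset_Icc_self htt), hc2] at h0
    have hk2 := d.k2_pos
    have hinner : 0 - c.1 * u t - (u t)^2/2 + 0 = 0 := by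
      rcases mul_eq_zero.1 h0 with h | h
      · exact absurd h hk2.ne'
      · exact h
    have hunn := m.unn t ht'
    by_contra hne
    have hupos : 0 < u t := lt_of_le_of_ne hunn (Ne.symm hne)
    nlinarith [mul_nonneg hc1 hunn, hupos]
  intro t ht
  refine ⟨?_, heall t ht⟩
  rcases eq_or_lt_of_le ht.1 with hteq | htgt
  · rw [← hteq]; exact ha
  · rcases eq_or_lt_of_le ht.2 with hteq1 | htlt1
    · -- t = 1 : take limits along Ioo σ 1
      have hNB : (𝓝[Ioo σ 1] (1:ℝ)).NeBot := by
        apply mem_closure_iff_nhdsWithin_neBot.1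
        rw [closure_Ioo (ne_of_lt hσ.2)]
        exact ⟨hσ.2.le, le_rfl⟩
      have h1 : Tendsto u (𝓝[Ioo σ 1] (1:ℝ)) (𝓝 (u 1)) := by
        apply (m.cu.continuousWithinAt (right_mem_Icc.2 zero_le_one)).mono_left
        apply nhdsWithin_mono
        intro x hx
        exact ⟨(lt_trans hσ.1 hx.1).le, hx.2.le⟩
      have h2 : Tendsto u (𝓝[Ioo σ 1] (1:ℝ)) (𝓝 0) := by
        apply Tendsto.congr' _ tendsto_const_nhds
        apply eventually_nhdsWithin_of_forall
        intro x hx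
        exact (hualt x hx).symm
      rw [hteq1]
      exact tendsto_nhds_unique h1 h2
    · exact hualt t ⟨htgt, htlt1⟩

/- ### Uniqueness of limit objects -/

/-- Two continuous functions agreeing on `[0,b)` agree at `b`. -/
lemma eq_at {f g : ℝ → ℝ} {b : ℝ} (hb : 0 < b) (hb1 : b ≤ 1)
    (hf : ContinuousOn f (Icc 0 1)) (hg : ContinuousOn g (Icc 0 1))
    (hfg : ∀ x ∈ Ico (0:ℝ) b, f x = g x) : f b = g b := by
  have hNB : (𝓝[Ico (0:ℝ) b] b).NeBot := by
    apply mem_closure_iff_nhdsWithin_neBot.1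
    rw [closure_Ico hb.ne]
    exact ⟨hb.le, le_rfl⟩
  have hbm : b ∈ Icc (0:ℝ) 1 := ⟨hb.le, hb1⟩
  have hsub : Ico (0:ℝ) b ⊆ Icc 0 1 := fun x hx => ⟨hx.1, le_trans hx.2.le hb1⟩
  have h1 : Tendsto f (𝓝[Ico 0 b] b) (𝓝 (f b)) :=
    (hf.continuousWithinAt hbm).mono_left (nhdsWithin_mono _ hsub)
  have h2 : Tendsto f (𝓝[Ico 0 b] b) (𝓝 (g b)) := by
    apply Filter.Tendsto.congr'
      (f₁ := g) ?_ ((hg.continuousWithinAt hbm).mono_left (nhdsWithin_mono _ hsub))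
    exact eventually_nhdsWithin_of_forall (fun x hx => (hfg x hx).symm)
  exact tendsto_nhds_unique h1 h2

lemma Mem.endpoint_unique_aux {c : ℝ × ℝ} {u1 e1 u2 e2 : ℝ → ℝ}
    (m1 : d.Mem c u1 e1) (m2 : d.Mem c u2 e2) (hle : fz e1 ≤ fz e2) :
    u1 1 = u2 1 ∧ e1 1 = e2 1 := by
  set σ := fz e1 with hσdef
  have hσmem := fz_mem m1
  have hσpos := fz_pos m1
  have hagree : ∀ b, 0 ≤ b → b < σ → ∀ t ∈ Icc (0:ℝ) b, u1 t = u2 t ∧ e1 t = e2 t := by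
    intro b hb0 hbσ
    have hb1 : b ≤ 1 := le_trans hbσ.le hσmem.2
    have hsubb : Icc (0:ℝ) b ⊆ Icc (0:ℝ) 1 := Icc_subset_Icc le_rfl hb1
    have he1pos : ∀ t ∈ Icc (0:ℝ) b, 0 < e1 t := fun t ht =>
      fz_lt_pos m1 t (hsubb ht) (lt_of_le_of_lt ht.2 hbσ)
    have he2pos : ∀ t ∈ Icc (0:ℝ) b, 0 < e2 t := fun t ht =>
      fz_lt_pos m2 t (hsubb ht) (lt_of_le_of_lt ht.2 (lt_of_lt_of_le hbσ hle))
    have hu1pos : ∀ t ∈ Icc (0:ℝ) b, 0 < u1 t := fun t ht =>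
      m1.upos t (hsubb ht) (he1pos t ht)
    have hu2pos : ∀ t ∈ Icc (0:ℝ) b, 0 < u2 t := fun t ht =>
      m2.upos t (hsubb ht) (he2pos t ht)
    apply agree (d := d) (c := c) hb0 hb1 (m1.cu.mono hsubb) (m1.ce.mono hsubb) (m2.cu.mono hsubb)
      (m2.ce.mono hsubb) ?_ ?_ hu1pos hu2pos (by rw [m1.u0, m2.u0]) (by rw [m1.e0, m2.e0])
    · intro t ht
      exact ⟨m1.hasDerivWithinAt_u le_rfl hb0 hb1 hu1pos t ht,
        m1.hasDerivWithinAt_e t ⟨ht.1, lt_of_lt_of_le ht.2 hb1⟩⟩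
    · intro t ht
      exact ⟨m2.hasDerivWithinAt_u le_rfl hb0 hb1 hu2pos t ht,
        m2.hasDerivWithinAt_e t ⟨ht.1, lt_of_lt_of_le ht.2 hb1⟩⟩
  rcases lt_or_eq_of_le hσmem.2 with hσlt | hσ1
  · have hez1 : e1 σ = 0 := fz_zero m1 hσlt
    have hagof : ∀ x ∈ Ico (0:ℝ) σ, u1 x = u2 x := fun x hx =>
      (hagree x hx.1 hx.2 x (right_mem_Icc.2 hx.1)).1
    have hagofe : ∀ x ∈ Ico (0:ℝ) σ, e1 x = e2 x := fun x hx =>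
      (hagree x hx.1 hx.2 x (right_mem_Icc.2 hx.1)).2
    have hue : u1 σ = u2 σ := eq_at hσpos hσmem.2 m1.cu m2.cu hagof
    have hee : e1 σ = e2 σ := eq_at hσpos hσmem.2 m1.ce m2.ce hagofe
    have hσIoo : σ ∈ Ioo (0:ℝ) 1 := ⟨hσpos, hσlt⟩
    have hepos1 : ∀ t ∈ Ico (0:ℝ) σ, 0 < e1 t := fun t ht =>
      fz_lt_pos m1 t ⟨ht.1, le_trans ht.2.le hσmem.2⟩ ht.2
    have hepos2 : ∀ t ∈ Ico (0:ℝ) σ, 0 < e2 t := fun t ht =>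
      fz_lt_pos m2 t ⟨ht.1, le_trans ht.2.le hσmem.2⟩ (lt_of_lt_of_le ht.2 hle)
    rcases lt_or_eq_of_le (m1.unn σ (Ioo_subset_Icc_self hσIoo)) with hupos | huz
    · exact (no_interior_touch m1 hσIoo hez1 hepos1 hupos).elim
    · have hz1 := zero_cont m1 hσIoo hez1 hepos1 huz.symm
      have hz2 := zero_cont m2 hσIoo (by rw [← hee]; exact hez1) hepos2
        (by rw [← hue]; exact huz.symm)
      have h1m : (1:ℝ) ∈ Icc σ 1 := right_mem_Icc.2 hσmem.2
      constructor
      · rw [(hz1 1 h1m).1, (hz2 1 h1m).1]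
      · rw [(hz1 1 h1m).2, (hz2 1 h1m).2]
  · constructor
    · apply eq_at one_pos le_rfl m1.cu m2.cu
      intro x hx
      exact (hagree x hx.1 (lt_of_lt_of_le hx.2 hσ1.symm.le) x (right_mem_Icc.2 hx.1)).1
    · apply eq_at one_pos le_rfl m1.ce m2.ce
      intro x hx
      exact (hagree x hx.1 (lt_of_lt_of_le hx.2 hσ1.symm.le) x (right_mem_Icc.2 hx.1)).2

lemma Mem.endpoint_unique {c : ℝ × ℝ} {u1 e1 u2 e2 : ℝ → ℝ}
    (m1 : d.Mem c u1 e1) (m2 : d.Mem c u2 e2) : u1 1 = u2 1 ∧ e1 1 = e2 1 := by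
  rcases le_total (fz e1) (fz e2) with h | h
  · exact m1.endpoint_unique_aux m2 h
  · obtain ⟨h1, h2⟩ := m2.endpoint_unique_aux m1 h
    exact ⟨h1.symm, h2.symm⟩

/-- A limit object agrees at the endpoint with any classical solution. -/
lemma Mem.eq_psol {c : ℝ × ℝ} {us es u e : ℝ → ℝ}
    (m : d.Mem c us es) (hp : d.PSol c u e) : us 1 = u 1 ∧ es 1 = e 1 := by
  obtain ⟨hcu, hce, hu0, he0, hd, hpos⟩ := hp
  set σ := fz es with hσdef
  have hσmem := fz_mem m
  have hσpos := fz_pos m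
  have hagree : ∀ b, 0 ≤ b → b < σ → b < 1 →
      ∀ t ∈ Icc (0:ℝ) b, us t = u t ∧ es t = e t := by
    intro b hb0 hbσ hb1
    have hsubb : Icc (0:ℝ) b ⊆ Icc (0:ℝ) 1 := Icc_subset_Icc le_rfl hb1.le
    have hespos : ∀ t ∈ Icc (0:ℝ) b, 0 < es t := fun t ht =>
      fz_lt_pos m t (hsubb ht) (lt_of_le_of_lt ht.2 hbσ)
    have huspos : ∀ t ∈ Icc (0:ℝ) b, 0 < us t := fun t ht =>
      m.upos t (hsubb ht) (hespos t ht)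
    apply agree (d := d) (c := c) hb0 hb1.le (m.cu.mono hsubb) (m.ce.mono hsubb) (hcu.mono hsubb)
      (hce.mono hsubb) ?_ ?_ huspos
      (fun t ht => (hpos t ⟨ht.1, lt_of_le_of_lt ht.2 hb1⟩).1)
      (by rw [m.u0, hu0]) (by rw [m.e0, he0])
    · intro t ht
      exact ⟨m.hasDerivWithinAt_u le_rfl hb0 hb1.le huspos t ht,
        m.hasDerivWithinAt_e t ⟨ht.1, lt_trans ht.2 hb1⟩⟩
    · intro t ht
      exact hd t ⟨ht.1, lt_trans ht.2 hb1⟩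
  have hσ1 : σ = 1 := by
    by_contra hne
    have hσlt : σ < 1 := lt_of_le_of_ne hσmem.2 hne
    have hez : es σ = 0 := fz_zero m hσlt
    have hEq : es σ = e σ := by
      apply eq_at hσpos hσmem.2 m.ce hce
      intro x hx
      exact (hagree x hx.1 hx.2 (lt_trans hx.2 hσlt) x (right_mem_Icc.2 hx.1)).2
    have hposσ := (hpos σ ⟨hσpos.le, hσlt⟩).2
    rw [← hEq, hez] at hposσ
    exact lt_irrefl 0 hposσ
  constructor
  · apply eq_at one_pos le_rfl m.cu hcu
    intro x hx
    exact (hagree x hx.1 (lt_of_lt_of_le hx.2 hσ1.symm.le) hx.2 x (right_mem_Icc.2 hx.1)).1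
  · apply eq_at one_pos le_rfl m.ce hce
    intro x hx
    exact (hagree x hx.1 (lt_of_lt_of_le hx.2 hσ1.symm.le) hx.2 x (right_mem_Icc.2 hx.1)).2

end D

/- ### Selection of solutions and the endpoint map -/

variable (Γ α ν u₀ e₀ : ℝ)

open Classical in
def selu (c : ℝ × ℝ) : ℝ → ℝ :=
  if h : c ∈ Feasible Γ α ν u₀ e₀ then h.choose else fun _ => 0

open Classical in
def sele (c : ℝ × ℝ) : ℝ → ℝ :=
  if h : c ∈ Feasible Γ α ν u₀ e₀ then h.choose_spec.choose else fun _ => 0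

def Vmap (c : ℝ × ℝ) : ℝ × ℝ := (selu Γ α ν u₀ e₀ c 1, sele Γ α ν u₀ e₀ c 1)

lemma sel_spec {c : ℝ × ℝ} (h : c ∈ Feasible Γ α ν u₀ e₀) :
    IsProfileSol Γ α ν u₀ e₀ c (selu Γ α ν u₀ e₀ c) (sele Γ α ν u₀ e₀ c) (Set.Icc 0 1) ∧
    ∀ x ∈ Set.Icc (0:ℝ) 1, 0 < selu Γ α ν u₀ e₀ c x ∧ 0 < sele Γ α ν u₀ e₀ c x := by
  rw [selu, sele, dif_pos h, dif_pos h]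
  exact h.choose_spec.choose_spec

namespace D

variable {d : D}

/-- Equi-Lipschitz pointwise convergence upgrades to uniform convergence. -/
lemma unif_conv {ι : Type*} {l : Filter ι} {M : ℝ} (hM : 0 < M) {f g : ι → ℝ → ℝ} {F G : ℝ → ℝ}
    (hlip : ∀ᶠ i in l, ∀ s ∈ Icc (0:ℝ) 1, ∀ t ∈ Icc (0:ℝ) 1,
      |f i s - f i t| ≤ M * |s - t| ∧ |g i s - g i t| ≤ M * |s - t|)
    (hF : ∀ s ∈ Icc (0:ℝ) 1, ∀ t ∈ Icc (0:ℝ) 1, |F s - F t| ≤ M * |s - t|)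
    (hG : ∀ s ∈ Icc (0:ℝ) 1, ∀ t ∈ Icc (0:ℝ) 1, |G s - G t| ≤ M * |s - t|)
    (hpt : ∀ t ∈ Icc (0:ℝ) 1, Tendsto (fun i => f i t) l (𝓝 (F t)) ∧
      Tendsto (fun i => g i t) l (𝓝 (G t)))
    {ε : ℝ} (hε : 0 < ε) :
    ∀ᶠ i in l, ∀ t ∈ Icc (0:ℝ) 1, |f i t - F t| ≤ ε ∧ |g i t - G t| ≤ ε := by
  obtain ⟨n, hn⟩ := exists_nat_gt (3 * M / ε)
  have hn0 : (0:ℝ) < n := lt_of_le_of_lt (by positivity) hn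
  have hMn : M / n ≤ ε / 3 := by
    rw [div_le_div_iff₀ hn0 (by norm_num : (0:ℝ) < 3)]
    rw [div_lt_iff₀ hε] at hn
    nlinarith
  have hgrid : ∀ j : ℕ, j ∈ Finset.range (n+1) → ((j:ℝ)/n) ∈ Icc (0:ℝ) 1 := by
    intro j hj
    have hjn : (j:ℝ) ≤ n := by
      have := Finset.mem_range.1 hj
      exact_mod_cast Nat.lt_succ_iff.1 this
    constructor
    · positivity
    · rw [div_le_one hn0]; exact hjn
  have hall : ∀ᶠ i in l, ∀ j ∈ Finset.range (n+1),
      |f i ((j:ℝ)/n) - F ((j:ℝ)/n)| ≤ ε/3 ∧ |g i ((j:ℝ)/n) - G ((j:ℝ)/n)| ≤ ε/3 := by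
    rw [Filter.eventually_all_finset]
    intro j hj
    have htj := hgrid j hj
    have h1 := (hpt _ htj).1
    have h2 := (hpt _ htj).2
    have e1 : ∀ᶠ i in l, |f i ((j:ℝ)/n) - F ((j:ℝ)/n)| ≤ ε/3 := by
      have := Metric.tendsto_nhds.1 h1 (ε/3) (by positivity)
      filter_upwards [this] with i hi
      rw [Real.dist_eq] at hi
      exact hi.le
    have e2 : ∀ᶠ i in l, |g i ((j:ℝ)/n) - G ((j:ℝ)/n)| ≤ ε/3 := by
      have := Metric.tendsto_nhds.1 h2 (ε/3) (by positivity)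
      filter_upwards [this] with i hi
      rw [Real.dist_eq] at hi
      exact hi.le
    filter_upwards [e1, e2] with i hi1 hi2 using ⟨hi1, hi2⟩
  filter_upwards [hlip, hall] with i hlipi halli
  intro t ht
  set j : ℕ := ⌊t * n⌋₊ with hjdef
  have hj0 : (j:ℝ) ≤ t * n := Nat.floor_le (by nlinarith [ht.1])
  have hj1 : t * n < (j:ℝ) + 1 := Nat.lt_floor_add_one _
  have hjmem : j ∈ Finset.range (n+1) := by
    rw [Finset.mem_range, Nat.lt_succ_iff]
    have : (j:ℝ) ≤ n := by nlinarith [ht.2]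
    exact_mod_cast this
  have htj := hgrid j hjmem
  have hclose : |t - (j:ℝ)/n| ≤ 1/n := by
    have hja : (j:ℝ)/n ≤ t := by rw [div_le_iff₀ hn0]; exact hj0
    have hjb : t ≤ (j:ℝ)/n + 1/n := by
      rw [← add_div, le_div_iff₀ hn0]
      exact hj1.le
    rw [abs_le]
    constructor
    · have h1n : (0:ℝ) < 1/n := by positivity
      linarith
    · linarith
  obtain ⟨hj1f, hj2f⟩ := halli j hjmem
  obtain ⟨hlf, hlg⟩ := hlipi t ht ((j:ℝ)/n) htj
  have hFl := hF ((j:ℝ)/n) htj t ht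
  have hGl := hG ((j:ℝ)/n) htj t ht
  have hM1 : M * |t - (j:ℝ)/n| ≤ ε/3 := by
    have := mul_le_mul_of_nonneg_left hclose hM.le
    calc M * |t - (j:ℝ)/n| ≤ M * (1/n) := this
      _ = M / n := by ring
      _ ≤ ε/3 := hMn
  have hM2 : M * |(j:ℝ)/n - t| ≤ ε/3 := by
    rw [abs_sub_comm]; exact hM1
  constructor
  · calc |f i t - F t| = |(f i t - f i ((j:ℝ)/n)) + (f i ((j:ℝ)/n) - F ((j:ℝ)/n))
        + (F ((j:ℝ)/n) - F t)| := by ring_nf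
      _ ≤ |f i t - f i ((j:ℝ)/n)| + |f i ((j:ℝ)/n) - F ((j:ℝ)/n)| + |F ((j:ℝ)/n) - F t| :=
        abs_add_three _ _ _
      _ ≤ ε/3 + ε/3 + ε/3 := by
          have := le_trans hlf hM1
          have := le_trans hFl hM2
          linarith [le_trans hlf hM1, hj1f, le_trans hFl hM2]
      _ = ε := by ring
  · calc |g i t - G t| = |(g i t - g i ((j:ℝ)/n)) + (g i ((j:ℝ)/n) - G ((j:ℝ)/n))
        + (G ((j:ℝ)/n) - G t)| := by ring_nf
      _ ≤ |g i t - g i ((j:ℝ)/n)| + |g i ((j:ℝ)/n) - G ((j:ℝ)/n)| + |G ((j:ℝ)/n) - G t| :=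
        abs_add_three _ _ _
      _ ≤ ε/3 + ε/3 + ε/3 := by
          linarith [le_trans hlg hM1, hj2f, le_trans hGl hM2]
      _ = ε := by ring

set_option maxHeartbeats 4000000 in
/-- Limit along an ultrafilter refining `𝓝[feas] c0` produces a limit object whose endpoint is
the limit of the endpoint map. -/
lemma ultra (d : D) (c0 : ℝ × ℝ) (h1 : |c0.1| + 1 ≤ d.R) (h2 : |c0.2| + 1 ≤ d.R)
    (U : Ultrafilter (ℝ × ℝ)) (hU : ↑U ≤ 𝓝[d.feas] c0) :
    ∃ u e : ℝ → ℝ, d.Mem c0 u e ∧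
      Tendsto (Vmap d.Γ d.α d.ν d.u₀ d.e₀) ↑U (𝓝 (u 1, e 1)) := by
  classical
  have hc1R : |c0.1| ≤ d.R := by linarith
  have hc2R : |c0.2| ≤ d.R := by linarith
  set su : (ℝ × ℝ) → ℝ → ℝ := selu d.Γ d.α d.ν d.u₀ d.e₀ with hsudef
  set se : (ℝ × ℝ) → ℝ → ℝ := sele d.Γ d.α d.ν d.u₀ d.e₀ with hsedef
  have hnhds : ↑U ≤ 𝓝 c0 := le_trans hU nhdsWithin_le_nhds
  have hfeasU : d.feas ∈ U := hU self_mem_nhdsWithin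
  set S : Set (ℝ × ℝ) := d.feas ∩ {c | |c.1| ≤ d.R ∧ |c.2| ≤ d.R} with hSdef
  have hSU : S ∈ U := by
    apply inter_mem hfeasU
    apply hnhds
    have hsub : Metric.ball c0 1 ⊆ {c : ℝ × ℝ | |c.1| ≤ d.R ∧ |c.2| ≤ d.R} := by
      intro c hc
      rw [Metric.mem_ball, Prod.dist_eq] at hc
      have d1 : dist c.1 c0.1 < 1 := lt_of_le_of_lt (le_max_left _ _) hc
      have d2 : dist c.2 c0.2 < 1 := lt_of_le_of_lt (le_max_right _ _) hc
      rw [Real.dist_eq] at d1 d2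
      constructor
      · have := abs_sub_abs_le_abs_sub c.1 c0.1
        linarith
      · have := abs_sub_abs_le_abs_sub c.2 c0.2
        linarith
    exact Filter.mem_of_superset (Metric.ball_mem_nhds c0 one_pos) hsub
  have hfs : ∀ c ∈ S, d.FSol c (su c) (se c) := fun c hc =>
    sel_spec d.Γ d.α d.ν d.u₀ d.e₀ hc.1
  set UE : ℝ := max d.Uc d.Ec with hUEdef
  -- pointwise ultrafilter limits
  have hptu : ∀ t ∈ Icc (0:ℝ) 1, ∃ x ∈ Icc (0:ℝ) UE,
      Tendsto (fun c => su c t) ↑U (𝓝 x) := by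
    intro t ht
    have hle : ↑(U.map (fun c => su c t)) ≤ 𝓟 (Icc (0:ℝ) UE) := by
      rw [Ultrafilter.coe_map, le_principal_iff, Filter.mem_map]
      apply Filter.mem_of_superset hSU
      intro c hc
      have hbd := (hfs c hc).bounds hc.2.1 hc.2.2 t ht
      have hpos := (hfs c hc).upos t ht
      exact ⟨hpos.le, le_trans hbd.1 (le_max_left _ _)⟩
    obtain ⟨x, hxmem, hx⟩ := isCompact_Icc.ultrafilter_le_nhds (U.map (fun c => su c t)) hle
    rw [Ultrafilter.coe_map] at hx
    exact ⟨x, hxmem, hx⟩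
  have hpte : ∀ t ∈ Icc (0:ℝ) 1, ∃ x ∈ Icc (0:ℝ) UE,
      Tendsto (fun c => se c t) ↑U (𝓝 x) := by
    intro t ht
    have hle : ↑(U.map (fun c => se c t)) ≤ 𝓟 (Icc (0:ℝ) UE) := by
      rw [Ultrafilter.coe_map, le_principal_iff, Filter.mem_map]
      apply Filter.mem_of_superset hSU
      intro c hc
      have hbd := (hfs c hc).bounds hc.2.1 hc.2.2 t ht
      have hpos := (hfs c hc).epos t ht
      exact ⟨hpos.le, le_trans hbd.2 (le_max_right _ _)⟩
    obtain ⟨x, hxmem, hx⟩ := isCompact_Icc.ultrafilter_le_nhds (U.map (fun c => se c t)) hle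
    rw [Ultrafilter.coe_map] at hx
    exact ⟨x, hxmem, hx⟩
  choose! xu hxumem hxuten using hptu
  choose! xe hxemem hxeten using hpte
  have hlipS : ∀ᶠ c in ↑U, ∀ s ∈ Icc (0:ℝ) 1, ∀ t ∈ Icc (0:ℝ) 1,
      |su c s - su c t| ≤ d.Mc * |s - t| ∧ |se c s - se c t| ≤ d.Mc * |s - t| :=
    Filter.eventually_of_mem hSU (fun c hc s hs t ht => (hfs c hc).lipsch hc.2.1 hc.2.2 s hs t ht)
  have hxulip : ∀ s ∈ Icc (0:ℝ) 1, ∀ t ∈ Icc (0:ℝ) 1, |xu s - xu t| ≤ d.Mc * |s - t| := by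
    intro s hs t ht
    have hT : Tendsto (fun c => |su c s - su c t|) ↑U (𝓝 |xu s - xu t|) :=
      ((hxuten s hs).sub (hxuten t ht)).abs
    apply le_of_tendsto hT
    filter_upwards [hlipS] with c hc using (hc s hs t ht).1
  have hxelip : ∀ s ∈ Icc (0:ℝ) 1, ∀ t ∈ Icc (0:ℝ) 1, |xe s - xe t| ≤ d.Mc * |s - t| := by
    intro s hs t ht
    have hT : Tendsto (fun c => |se c s - se c t|) ↑U (𝓝 |xe s - xe t|) :=
      ((hxeten s hs).sub (hxeten t ht)).abs
    apply le_of_tendsto hT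
    filter_upwards [hlipS] with c hc using (hc s hs t ht).2
  have hpt : ∀ t ∈ Icc (0:ℝ) 1, Tendsto (fun c => su c t) ↑U (𝓝 (xu t)) ∧
      Tendsto (fun c => se c t) ↑U (𝓝 (xe t)) := fun t ht => ⟨hxuten t ht, hxeten t ht⟩
  have hUC : ∀ ε : ℝ, 0 < ε → ∀ᶠ c in ↑U, ∀ t ∈ Icc (0:ℝ) 1,
      |su c t - xu t| ≤ ε ∧ |se c t - xe t| ≤ ε := fun ε hε =>
    unif_conv d.Mc_pos hlipS hxulip hxelip hpt hε
  have h0mem : (0:ℝ) ∈ Icc (0:ℝ) 1 := by norm_num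
  have h1mem : (1:ℝ) ∈ Icc (0:ℝ) 1 := by norm_num
  have hxu0 : xu 0 = d.u₀ := by
    apply tendsto_nhds_unique ((hxuten 0 h0mem).congr' ?_) tendsto_const_nhds
    filter_upwards [hSU] with c hc using (hfs c hc).1.1
  have hxe0 : xe 0 = d.e₀ := by
    apply tendsto_nhds_unique ((hxeten 0 h0mem).congr' ?_) tendsto_const_nhds
    filter_upwards [hSU] with c hc using (hfs c hc).1.2.1
  have hxunn : ∀ t ∈ Icc (0:ℝ) 1, 0 ≤ xu t := fun t ht =>
    ge_of_tendsto (hxuten t ht)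
      (Filter.eventually_of_mem hSU fun c hc => ((hfs c hc).upos t ht).le)
  have hxenn : ∀ t ∈ Icc (0:ℝ) 1, 0 ≤ xe t := fun t ht =>
    ge_of_tendsto (hxeten t ht)
      (Filter.eventually_of_mem hSU fun c hc => ((hfs c hc).epos t ht).le)
  have hxuub : ∀ t ∈ Icc (0:ℝ) 1, xu t ≤ d.Uc := fun t ht =>
    le_of_tendsto (hxuten t ht)
      (Filter.eventually_of_mem hSU fun c hc => ((hfs c hc).bounds hc.2.1 hc.2.2 t ht).1)
  have hxeub : ∀ t ∈ Icc (0:ℝ) 1, xe t ≤ d.Ec := fun t ht =>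
    le_of_tendsto (hxeten t ht)
      (Filter.eventually_of_mem hSU fun c hc => ((hfs c hc).bounds hc.2.1 hc.2.2 t ht).2)
  have hxlow : ∀ t ∈ Icc (0:ℝ) 1, min d.u₀ (d.κc * xe t) ≤ xu t := by
    intro t ht
    have hT2 : Tendsto (fun c => min d.u₀ (d.κc * se c t)) ↑U
        (𝓝 (min d.u₀ (d.κc * xe t))) :=
      tendsto_const_nhds.min ((hxeten t ht).const_mul _)
    apply le_of_tendsto_of_tendsto hT2 (hxuten t ht)
    exact Filter.eventually_of_mem hSU fun c hc => (hfs c hc).low hc.2.1 hc.2.2 t ht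
  have hxucont : ContinuousOn xu (Icc 0 1) := by
    apply LipschitzOnWith.continuousOn (K := Real.toNNReal d.Mc)
    rw [lipschitzOnWith_iff_dist_le_mul]
    intro a ha b hb
    rw [Real.dist_eq, Real.dist_eq, Real.coe_toNNReal _ d.Mc_pos.le]
    exact hxulip a ha b hb
  have hxecont : ContinuousOn xe (Icc 0 1) := by
    apply LipschitzOnWith.continuousOn (K := Real.toNNReal d.Mc)
    rw [lipschitzOnWith_iff_dist_le_mul]
    intro a ha b hb
    rw [Real.dist_eq, Real.dist_eq, Real.coe_toNNReal _ d.Mc_pos.le]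
    exact hxelip a ha b hb
  have tri5 : ∀ a b cc dd ee : ℝ, |a - b - cc - dd + ee| ≤ |a| + |b| + |cc| + |dd| + |ee| := by
    intro a b cc dd ee
    have h1 : a - b - cc - dd + ee = (a + -b + -cc) + -dd + ee := by ring
    rw [h1]
    have h2 := abs_add_three (a + -b + -cc) (-dd) ee
    have h3 := abs_add_three a (-b) (-cc)
    simp only [abs_neg] at h2 h3
    linarith
  have hdistco : ∀ c : ℝ × ℝ, |c.1 - c0.1| ≤ dist c c0 ∧ |c.2 - c0.2| ≤ dist c c0 := by
    intro c
    rw [Prod.dist_eq]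
    constructor
    · rw [← Real.dist_eq]; exact le_max_left _ _
    · rw [← Real.dist_eq]; exact le_max_right _ _
  -- integral identity for e
  have hinte : ∀ t ∈ Icc (0:ℝ) 1, xe t = d.e₀ + ∫ s in (0:ℝ)..t, d.Fe c0 (xu s, xe s) := by
    intro t ht
    have hgcont : ContinuousOn (fun s => d.Fe c0 (xu s, xe s)) (Icc 0 1) := by
      apply ContinuousOn.mul continuousOn_const
      exact ((continuousOn_const.sub (continuousOn_const.mul hxucont)).sub
        ((hxucont.pow 2).div_const 2)).add hxecont
    have hI : Tendsto (fun c => ∫ s in (0:ℝ)..t, d.Fe c (su c s, se c s)) ↑U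
        (𝓝 (∫ s in (0:ℝ)..t, d.Fe c0 (xu s, xe s))) := by
      rw [Metric.tendsto_nhds]
      intro ε hε
      set CC : ℝ := d.k2 * (2 + d.R + 2 * d.Uc) + 1 with hCCdef
      have hk2 := d.k2_pos
      have hRp := d.R_pos
      have hUcp := d.Uc_pos
      have hCC : 0 < CC := by positivity
      set δ' : ℝ := ε / (2 * CC) with hδ'def
      have hδ' : 0 < δ' := by positivity
      have hball : ∀ᶠ c in ↑U, dist c c0 ≤ δ' := by
        have hmem := hnhds (Metric.closedBall_mem_nhds c0 hδ')
        exact Filter.eventually_of_mem hmem (fun c hc => hc)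
      filter_upwards [hball, hUC δ' hδ', hSU] with c hcb hcu hcS
      rw [Real.dist_eq]
      have hintf : IntervalIntegrable (fun s => d.Fe c (su c s, se c s)) volume 0 t :=
        (((hfs c hcS).contFe).mono (Icc_subset_Icc_right ht.2)).intervalIntegrable_of_Icc ht.1
      have hintg : IntervalIntegrable (fun s => d.Fe c0 (xu s, xe s)) volume 0 t :=
        ((hgcont).mono (Icc_subset_Icc_right ht.2)).intervalIntegrable_of_Icc ht.1
      rw [← intervalIntegral.integral_sub hintf hintg]
      have hbnd : ∀ s ∈ Set.uIoc (0:ℝ) t,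
          ‖d.Fe c (su c s, se c s) - d.Fe c0 (xu s, xe s)‖ ≤ CC * δ' := by
        intro s hs
        have hs' : s ∈ Icc (0:ℝ) 1 := by
          rw [Set.uIoc_of_le ht.1] at hs
          exact ⟨hs.1.le, le_trans hs.2 ht.2⟩
        have hb := (hfs c hcS).bounds hcS.2.1 hcS.2.2 s hs'
        have hpos := (hfs c hcS).upos s hs'
        have hcp := hcu s hs'
        have hc1 := (hdistco c).1
        have hc2 := (hdistco c).2
        have hexp : d.Fe c (su c s, se c s) - d.Fe c0 (xu s, xe s)
            = d.k2 * ((c.2 - c0.2) - ((c.1 - c0.1) * su c s)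
              - (c0.1 * (su c s - xu s))
              - ((su c s + xu s) * (su c s - xu s) / 2) + (se c s - xe s)) := by
          unfold Fe; ring
        rw [Real.norm_eq_abs, hexp, abs_mul, abs_of_pos hk2]
        have htri := tri5 (c.2 - c0.2) ((c.1 - c0.1) * su c s) (c0.1 * (su c s - xu s))
          ((su c s + xu s) * (su c s - xu s) / 2) (se c s - xe s)
        have b1 : |c.2 - c0.2| ≤ δ' := le_trans hc2 hcb
        have b2 : |(c.1 - c0.1) * su c s| ≤ δ' * d.Uc := by
          rw [abs_mul, abs_of_nonneg hpos.le]
          exact mul_le_mul (le_trans hc1 hcb) hb.1 hpos.le hδ'.le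
        have b3 : |c0.1 * (su c s - xu s)| ≤ d.R * δ' := by
          rw [abs_mul]
          exact mul_le_mul hc1R hcp.1 (abs_nonneg _) d.R_pos.le
        have b4 : |(su c s + xu s) * (su c s - xu s) / 2| ≤ d.Uc * δ' := by
          rw [abs_div, abs_mul]
          have hsum : |su c s + xu s| ≤ 2 * d.Uc := by
            rw [abs_of_nonneg (by linarith [hxunn s hs', hpos.le] : (0:ℝ) ≤ su c s + xu s)]
            linarith [hb.1, hxuub s hs']
          have : |su c s + xu s| * |su c s - xu s| ≤ 2 * d.Uc * δ' :=
            mul_le_mul hsum hcp.1 (abs_nonneg _) (by positivity)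
          calc |su c s + xu s| * |su c s - xu s| / |2|
              = |su c s + xu s| * |su c s - xu s| / 2 := by norm_num
            _ ≤ 2 * d.Uc * δ' / 2 := by linarith
            _ = d.Uc * δ' := by ring
        have b5 : |se c s - xe s| ≤ δ' := hcp.2
        have hsum2 : |(c.2 - c0.2) - ((c.1 - c0.1) * su c s) - (c0.1 * (su c s - xu s))
            - ((su c s + xu s) * (su c s - xu s) / 2) + (se c s - xe s)|
            ≤ (2 + d.R + 2 * d.Uc) * δ' := by
          have := htri
          nlinarith [b1, b2, b3, b4, b5]
        calc d.k2 * |(c.2 - c0.2) - ((c.1 - c0.1) * su c s) - (c0.1 * (su c s - xu s))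
            - ((su c s + xu s) * (su c s - xu s) / 2) + (se c s - xe s)|
            ≤ d.k2 * ((2 + d.R + 2 * d.Uc) * δ') := mul_le_mul_of_nonneg_left hsum2 hk2.le
          _ ≤ CC * δ' := by nlinarith
      have := intervalIntegral.norm_integral_le_of_norm_le_const hbnd
      rw [Real.norm_eq_abs] at this
      have habs : |t - 0| ≤ 1 := by
        rw [sub_zero, abs_of_nonneg ht.1]; exact ht.2
      calc |∫ s in (0:ℝ)..t, (d.Fe c (su c s, se c s) - d.Fe c0 (xu s, xe s))|
          ≤ CC * δ' * |t - 0| := this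
        _ ≤ CC * δ' * 1 := by
            apply mul_le_mul_of_nonneg_left habs (by positivity)
        _ = ε / 2 := by rw [hδ'def]; field_simp
        _ < ε := by linarith
    have hlim2 : Tendsto (fun c => se c t) ↑U
        (𝓝 (d.e₀ + ∫ s in (0:ℝ)..t, d.Fe c0 (xu s, xe s))) := by
      apply (tendsto_const_nhds.add hI).congr'
      filter_upwards [hSU] with c hc
      exact ((hfs c hc).inte t ht).symm
    exact tendsto_nhds_unique (hxeten t ht) hlim2
  -- integral identity for u
  have hintu : ∀ a b : ℝ, 0 ≤ a → a ≤ b → b ≤ 1 → (∀ s ∈ Icc a b, 0 < xu s) →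
      xu b = xu a + ∫ s in a..b, d.Fu c0 (xu s, xe s) := by
    intro a b ha hab hb1 hpos
    have hsubab : Icc a b ⊆ Icc (0:ℝ) 1 := Icc_subset_Icc ha hb1
    obtain ⟨tm, htm, hmin⟩ := isCompact_Icc.exists_isMinOn (nonempty_Icc.2 hab)
      (hxucont.mono hsubab)
    set δb := xu tm with hδbdef
    have hδb : 0 < δb := hpos tm htm
    have hgcont : ContinuousOn (fun s => d.Fu c0 (xu s, xe s)) (Icc a b) := by
      apply ContinuousOn.mul continuousOn_const
      exact (continuousOn_const.add (hxucont.mono hsubab)).add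
        (((continuousOn_const.mul (hxecont.mono hsubab))).div (hxucont.mono hsubab)
          (fun s hs => (hpos s hs).ne'))
    have hI : Tendsto (fun c => ∫ s in a..b, d.Fu c (su c s, se c s)) ↑U
        (𝓝 (∫ s in a..b, d.Fu c0 (xu s, xe s))) := by
      rw [Metric.tendsto_nhds]
      intro ε hε
      have hk1 := d.k1_pos
      have hΓ := d.hΓ
      have hUcp := d.Uc_pos
      have hEcp := d.Ec_pos
      set CC : ℝ := d.k1 * (2 + d.Γ * (d.Uc + d.Ec) / (δb / 2 * δb)) + 1 with hCCdef
      have hCC : 0 < CC := by positivity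
      set δ' : ℝ := min (ε / (2 * CC)) (δb / 2) with hδ'def
      have hδ'1 : 0 < ε / (2 * CC) := by positivity
      have hδ' : 0 < δ' := lt_min hδ'1 (by positivity)
      have hball : ∀ᶠ c in ↑U, dist c c0 ≤ δ' := by
        have hmem := hnhds (Metric.closedBall_mem_nhds c0 hδ')
        exact Filter.eventually_of_mem hmem (fun c hc => hc)
      filter_upwards [hball, hUC δ' hδ', hSU] with c hcb hcu hcS
      rw [Real.dist_eq]
      have hintf : IntervalIntegrable (fun s => d.Fu c (su c s, se c s)) volume a b :=
        (((hfs c hcS).contFu).mono hsubab).intervalIntegrable_of_Icc hab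
      have hintg : IntervalIntegrable (fun s => d.Fu c0 (xu s, xe s)) volume a b :=
        (hgcont).intervalIntegrable_of_Icc hab
      rw [← intervalIntegral.integral_sub hintf hintg]
      have hbnd : ∀ s ∈ Set.uIoc a b,
          ‖d.Fu c (su c s, se c s) - d.Fu c0 (xu s, xe s)‖ ≤ CC * δ' := by
        intro s hs
        have hsab : s ∈ Icc a b := by
          rw [Set.uIoc_of_le hab] at hs
          exact ⟨hs.1.le, hs.2⟩
        have hs' : s ∈ Icc (0:ℝ) 1 := hsubab hsab
        have hb := (hfs c hcS).bounds hcS.2.1 hcS.2.2 s hs'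
        have hposc := (hfs c hcS).upos s hs'
        have heposc := (hfs c hcS).epos s hs'
        have hcp := hcu s hs'
        have hc1 := (hdistco c).1
        have hxlow2 : δb ≤ xu s := hmin hsab
        have hsulow : δb / 2 ≤ su c s := by
          have : |su c s - xu s| ≤ δ' := hcp.1
          have h2 : |su c s - xu s| ≤ δb / 2 := le_trans this (min_le_right _ _)
          have := abs_le.1 h2
          linarith [this.1]
        have hfrac : |se c s / su c s - xe s / xu s|
            ≤ (d.Uc + d.Ec) * δ' / (δb / 2 * δb) := by
          have hne1 : su c s ≠ 0 := hposc.ne'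
          have hne2 : xu s ≠ 0 := (hpos s hsab).ne'
          have hdiv : se c s / su c s - xe s / xu s
              = ((se c s - xe s) * xu s + xe s * (xu s - su c s)) / (su c s * xu s) := by
            field_simp
            ring
          rw [hdiv, abs_div]
          have hnum : |(se c s - xe s) * xu s + xe s * (xu s - su c s)|
              ≤ d.Uc * δ' + d.Ec * δ' := by
            have a1 : |(se c s - xe s) * xu s| ≤ δ' * d.Uc := by
              rw [abs_mul, abs_of_nonneg (hxunn s hs')]
              exact mul_le_mul hcp.2 (hxuub s hs') (hxunn s hs') hδ'.le
            have a2 : |xe s * (xu s - su c s)| ≤ d.Ec * δ' := by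
              rw [abs_mul, abs_sub_comm, abs_of_nonneg (hxenn s hs')]
              exact mul_le_mul (hxeub s hs') hcp.1 (abs_nonneg _) hEcp.le
            calc |(se c s - xe s) * xu s + xe s * (xu s - su c s)|
                ≤ |(se c s - xe s) * xu s| + |xe s * (xu s - su c s)| := abs_add_le _ _
              _ ≤ d.Uc * δ' + d.Ec * δ' := by nlinarith
          have hden : δb / 2 * δb ≤ |su c s * xu s| := by
            rw [abs_of_pos (mul_pos hposc (hpos s hsab))]
            apply mul_le_mul hsulow hxlow2 hδb.le hposc.le
          calc |(se c s - xe s) * xu s + xe s * (xu s - su c s)| / |su c s * xu s|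
              ≤ (d.Uc * δ' + d.Ec * δ') / (δb / 2 * δb) :=
                div_le_div₀ (by positivity) hnum (by positivity) hden
            _ = (d.Uc + d.Ec) * δ' / (δb / 2 * δb) := by ring
        have hexp : d.Fu c (su c s, se c s) - d.Fu c0 (xu s, xe s)
            = d.k1 * ((c.1 - c0.1) + (su c s - xu s)
              + d.Γ * (se c s / su c s - xe s / xu s)) := by
          unfold Fu
          field_simp
          ring
        rw [Real.norm_eq_abs, hexp, abs_mul, abs_of_pos hk1]
        have htri := abs_add_three (c.1 - c0.1) (su c s - xu s)
          (d.Γ * (se c s / su c s - xe s / xu s))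
        have b1 : |c.1 - c0.1| ≤ δ' := le_trans hc1 hcb
        have b2 : |su c s - xu s| ≤ δ' := hcp.1
        have b3 : |d.Γ * (se c s / su c s - xe s / xu s)|
            ≤ d.Γ * ((d.Uc + d.Ec) * δ' / (δb / 2 * δb)) := by
          rw [abs_mul, abs_of_pos hΓ]
          exact mul_le_mul_of_nonneg_left hfrac hΓ.le
        have hinner : |(c.1 - c0.1) + (su c s - xu s)
            + d.Γ * (se c s / su c s - xe s / xu s)|
            ≤ (2 + d.Γ * (d.Uc + d.Ec) / (δb / 2 * δb)) * δ' := by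
          have heq : d.Γ * ((d.Uc + d.Ec) * δ' / (δb / 2 * δb))
              = (d.Γ * (d.Uc + d.Ec) / (δb / 2 * δb)) * δ' := by ring
          rw [heq] at b3
          nlinarith [htri, b1, b2, b3]
        calc d.k1 * |(c.1 - c0.1) + (su c s - xu s)
            + d.Γ * (se c s / su c s - xe s / xu s)|
            ≤ d.k1 * ((2 + d.Γ * (d.Uc + d.Ec) / (δb / 2 * δb)) * δ') :=
              mul_le_mul_of_nonneg_left hinner hk1.le
          _ ≤ CC * δ' := by nlinarith
      have := intervalIntegral.norm_integral_le_of_norm_le_const hbnd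
      rw [Real.norm_eq_abs] at this
      have habs : |b - a| ≤ 1 := by
        rw [abs_of_nonneg (by linarith : (0:ℝ) ≤ b - a)]
        linarith
      have hδ'small : δ' ≤ ε / (2 * CC) := min_le_left _ _
      calc |∫ s in a..b, (d.Fu c (su c s, se c s) - d.Fu c0 (xu s, xe s))|
          ≤ CC * δ' * |b - a| := this
        _ ≤ CC * δ' * 1 := mul_le_mul_of_nonneg_left habs (by positivity)
        _ = CC * δ' := by ring
        _ ≤ CC * (ε / (2 * CC)) := mul_le_mul_of_nonneg_left hδ'small hCC.le
        _ = ε / 2 := by field_simp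
        _ < ε := by linarith
    have hmema : a ∈ Icc (0:ℝ) 1 := ⟨ha, le_trans hab hb1⟩
    have hmemb : b ∈ Icc (0:ℝ) 1 := ⟨le_trans ha hab, hb1⟩
    have hlim2 : Tendsto (fun c => su c b) ↑U
        (𝓝 (xu a + ∫ s in a..b, d.Fu c0 (xu s, xe s))) := by
      apply ((hxuten a hmema).add hI).congr'
      filter_upwards [hSU] with c hc
      exact ((hfs c hc).intu a b ha hab hb1).symm
    exact tendsto_nhds_unique (hxuten b hmemb) hlim2
  refine ⟨xu, xe, ⟨hxucont, hxecont, hxu0, hxe0, hxunn, hxenn, hxlow, hinte, hintu⟩, ?_⟩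
  exact (hxuten 1 h1mem).prodMk_nhds (hxeten 1 h1mem)

/-- Main convergence lemma. -/
lemma main (d : D) (c0 : ℝ × ℝ) (h1 : |c0.1| + 1 ≤ d.R) (h2 : |c0.2| + 1 ≤ d.R)
    (hcl : c0 ∈ closure d.feas) :
    ∃ u e : ℝ → ℝ, d.Mem c0 u e ∧
      Tendsto (Vmap d.Γ d.α d.ν d.u₀ d.e₀) (𝓝[d.feas] c0) (𝓝 (u 1, e 1)) := by
  have hNB : (𝓝[d.feas] c0).NeBot := mem_closure_iff_nhdsWithin_neBot.1 hcl
  obtain ⟨U, hU⟩ := @Ultrafilter.exists_le _ (𝓝[d.feas] c0) hNB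
  obtain ⟨u, e, hm, hten⟩ := d.ultra c0 h1 h2 U hU
  refine ⟨u, e, hm, ?_⟩
  rw [Filter.tendsto_iff_ultrafilter]
  intro W hW
  obtain ⟨u2, e2, hm2, hten2⟩ := d.ultra c0 h1 h2 W hW
  have heq := hm2.endpoint_unique hm
  rwa [heq.1, heq.2] at hten2

end D

end NSP

open NSP Set Filter Topology in
/-- Proposition (Psi_C0): the endpoint map `Ψ(c) = (u(1), e(1))` is continuous on 𝒞 and
extends continuously to the closure of 𝒞, taking the value `(u(1), 0)` at boundary points. -/
theorem stmt5 (Γ α ν u₀ e₀ : ℝ) (hΓ : 0 < Γ) (hα : 0 < α) (hν : 0 < ν)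
    (hu₀ : 0 < u₀) (he₀ : 0 < e₀) :
    ∃ Ψ : ℝ × ℝ → ℝ × ℝ,
      ContinuousOn Ψ (closure (Feasible Γ α ν u₀ e₀)) ∧
      (∀ c ∈ Feasible Γ α ν u₀ e₀, ∀ u e : ℝ → ℝ,
        IsProfileSol Γ α ν u₀ e₀ c u e (Set.Icc 0 1) →
        (∀ x ∈ Set.Icc (0:ℝ) 1, 0 < u x ∧ 0 < e x) →
        Ψ c = (u 1, e 1)) ∧
      (∀ c ∈ frontier (Feasible Γ α ν u₀ e₀), ∀ u e : ℝ → ℝ,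
        ContinuousOn u (Set.Icc 0 1) → ContinuousOn e (Set.Icc 0 1) →
        IsProfileSol Γ α ν u₀ e₀ c u e (Set.Ico 0 1) →
        (∀ x ∈ Set.Ico (0:ℝ) 1, 0 < u x ∧ 0 < e x) →
        e 1 = 0 →
        Ψ c = (u 1, 0)) := by
  classical
  set dd : ℝ × ℝ → NSP.D := fun c0 =>
    ⟨Γ, α, ν, u₀, e₀, max (|c0.1| + 1) (max (|c0.2| + 1) 1), hΓ, hα, hν, hu₀, he₀,
      le_trans (le_max_right (|c0.2| + 1) 1) (le_max_right (|c0.1| + 1) _)⟩ with hdddef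
  have hfeas : ∀ c0 : ℝ × ℝ, (dd c0).feas = Feasible Γ α ν u₀ e₀ := fun _ => rfl
  have hb1 : ∀ c0 : ℝ × ℝ, |c0.1| + 1 ≤ (dd c0).R := fun c0 => le_max_left _ _
  have hb2 : ∀ c0 : ℝ × ℝ, |c0.2| + 1 ≤ (dd c0).R := fun c0 =>
    le_trans (le_max_left _ 1) (le_max_right _ _)
  set V : ℝ × ℝ → ℝ × ℝ := NSP.Vmap Γ α ν u₀ e₀ with hVdef
  have hmain : ∀ c0 ∈ closure (Feasible Γ α ν u₀ e₀),
      ∃ us es : ℝ → ℝ, (dd c0).Mem c0 us es ∧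
        Tendsto V (𝓝[Feasible Γ α ν u₀ e₀] c0) (𝓝 (us 1, es 1)) := by
    intro c0 hc0
    have := (dd c0).main c0 (hb1 c0) (hb2 c0) (by rw [hfeas]; exact hc0)
    rw [hfeas] at this
    exact this
  refine ⟨extendFrom (Feasible Γ α ν u₀ e₀) V, ?_, ?_, ?_⟩
  · apply continuousOn_extendFrom Subset.rfl
    intro c0 hc0
    obtain ⟨us, es, _, ht⟩ := hmain c0 hc0
    exact ⟨(us 1, es 1), ht⟩
  · intro c hc u e hsol hpos
    have hFSol : (dd c).FSol c u e := ⟨hsol, hpos⟩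
    have hPSol : (dd c).PSol c u e := hFSol.psol
    obtain ⟨us, es, hm, ht⟩ := hmain c (subset_closure hc)
    have heq := hm.eq_psol hPSol
    have ht' : Tendsto V (𝓝[Feasible Γ α ν u₀ e₀] c) (𝓝 (u 1, e 1)) := by
      rw [← heq.1, ← heq.2]; exact ht
    exact extendFrom_eq (subset_closure hc) ht'
  · intro c hc u e hcu hce hsol hpos he1
    have hPSol : (dd c).PSol c u e := by
      refine ⟨hcu, hce, hsol.1, hsol.2.1, fun t ht => ?_, hpos⟩
      have hd1 := (hsol.2.2 t ht).1
      have hd2 := (hsol.2.2 t ht).2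
      have hmem : Ico t 1 ∈ 𝓝[Ici t] t := by
        rw [← Ici_inter_Iio]
        exact inter_mem self_mem_nhdsWithin (mem_nhdsWithin_of_mem_nhds (Iio_mem_nhds ht.2))
      constructor
      · exact (hd1.mono (Ico_subset_Ico_left ht.1)).mono_of_mem_nhdsWithin hmem
      · exact (hd2.mono (Ico_subset_Ico_left ht.1)).mono_of_mem_nhdsWithin hmem
    have hccl : c ∈ closure (Feasible Γ α ν u₀ e₀) := frontier_subset_closure hc
    obtain ⟨us, es, hm, ht⟩ := hmain c hccl
    have heq := hm.eq_psol hPSol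
    have hpair : ((u 1, (0:ℝ)) : ℝ × ℝ) = (us 1, es 1) := by
      rw [heq.1, heq.2, he1]
    have ht' : Tendsto V (𝓝[Feasible Γ α ν u₀ e₀] c) (𝓝 (u 1, 0)) := by
      rw [hpair]; exact ht
    exact extendFrom_eq hccl ht'
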